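/- arXiv:1307.6377 — 3 statements merged into one kernel-verified Lean document; each statement's English description precedes it below -/
import Mathlib

section
/- Let d ≥ 1, let U be a d×d unitary complex matrix, and let Λ be a d×d diagonal complex matrix. For n ∈ ℕ define M_n = (U − I) + 2πn(U + I) − i(U + I)Λ. Then there exists n₀ such that M_n is invertible for all n ≥ n₀, and the matrices σ_n = −M_n⁻¹ · ((U − I) − 2πn(U + I) + i(U + I)Λ) converge, as n → ∞, to I − 2P, where P is the matrix of the orthogonal projection of ℂ^d onto the eigenspace ker(U + I) of U for the eigenvalue −1. -/
open Filter Matrix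

lemma auxP (d : ℕ) (U : Matrix (Fin d) (Fin d) ℂ)
    (hU : U ∈ Matrix.unitaryGroup (Fin d) ℂ) :
    ∃ P : Matrix (Fin d) (Fin d) ℂ, P.IsHermitian ∧ P * P = P ∧
      (U + 1) * P = 0 ∧ P * (U + 1) = 0 ∧
      (∀ x : Fin d → ℂ, (U + 1) *ᵥ x = 0 → P *ᵥ x = x) := by
  classical
  set E := EuclideanSpace ℂ (Fin d)
  set K : Submodule ℂ E := LinearMap.ker (Matrix.toEuclideanLin (U + 1)) with hK
  set π : E →ₗ[ℂ] E := (K.subtypeL.comp (K.orthogonalProjectionOnto) : E →L[ℂ] E).toLinearMap with hπ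
  set P : Matrix (Fin d) (Fin d) ℂ := Matrix.toEuclideanLin.symm π with hPdef
  have hTP : Matrix.toEuclideanLin P = π := Matrix.toEuclideanLin.apply_symm_apply π
  -- bridging: P *ᵥ x in terms of π
  have key : ∀ x : Fin d → ℂ, P *ᵥ x =
      WithLp.equiv 2 (Fin d → ℂ) (π ((WithLp.equiv 2 (Fin d → ℂ)).symm x)) := by
    intro x
    rw [← hTP]
    rfl
  have memK : ∀ x : Fin d → ℂ,
      ((WithLp.equiv 2 (Fin d → ℂ)).symm x ∈ K ↔ (U + 1) *ᵥ x = 0) := by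
    intro x
    rw [hK, LinearMap.mem_ker]
    constructor
    · intro h
      have := congrArg (WithLp.equiv 2 (Fin d → ℂ)) h
      simpa [Matrix.add_mulVec] using this
    · intro h
      apply (WithLp.equiv 2 (Fin d → ℂ)).injective
      simpa [Matrix.add_mulVec] using h
  have mext : ∀ A B : Matrix (Fin d) (Fin d) ℂ, (∀ x, A *ᵥ x = B *ᵥ x) → A = B := by
    intro A B h
    apply Matrix.toLin'.injective
    ext x
    simpa [Matrix.toLin'_apply] using congrFun (congrArg id (h (Pi.single x 1))) _
  have hPmem : ∀ x : Fin d → ℂ, (U + 1) *ᵥ (P *ᵥ x) = 0 := by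
    intro x
    rw [← memK]
    have : (WithLp.equiv 2 (Fin d → ℂ)).symm (P *ᵥ x)
        = π ((WithLp.equiv 2 (Fin d → ℂ)).symm x) := by
      rw [key]; simp
    rw [this, hπ]
    exact Submodule.coe_mem _
  have hAP : (U + 1) * P = 0 := by
    apply mext
    intro x
    rw [← Matrix.mulVec_mulVec, Matrix.zero_mulVec]
    exact hPmem x
  have hfix : ∀ x : Fin d → ℂ, (U + 1) *ᵥ x = 0 → P *ᵥ x = x := by
    intro x hx
    have hxK : (WithLp.equiv 2 (Fin d → ℂ)).symm x ∈ K := (memK x).mpr hx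
    have : π ((WithLp.equiv 2 (Fin d → ℂ)).symm x)
        = (WithLp.equiv 2 (Fin d → ℂ)).symm x := by
      rw [hπ]
      exact (Submodule.starProjection_eq_self_iff (K := K)).mpr hxK
    rw [key, this]
    simp
  have hPP : P * P = P := by
    apply mext
    intro x
    rw [← Matrix.mulVec_mulVec]
    exact hfix _ (hPmem x)
  have hHerm : P.IsHermitian := by
    rw [Matrix.isHermitian_iff_isSymmetric, hTP, hπ]
    exact K.starProjection_isSymmetric
  refine ⟨P, hHerm, hPP, hAP, ?_, hfix⟩
  have hstar : (Matrix.conjTranspose U + 1) * P = 0 := by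
    apply mext
    intro x
    rw [← Matrix.mulVec_mulVec, Matrix.zero_mulVec]
    have h1 : (U + 1) *ᵥ (P *ᵥ x) = 0 := hPmem x
    have hU1 : Matrix.conjTranspose U * U = 1 := by
      have := hU.1
      rwa [Matrix.star_eq_conjTranspose] at this
    have hUx : U *ᵥ (P *ᵥ x) = -(P *ᵥ x) := by
      have := h1
      rw [Matrix.add_mulVec, Matrix.one_mulVec] at this
      exact eq_neg_of_add_eq_zero_left this
    have hUs : Matrix.conjTranspose U *ᵥ (P *ᵥ x) = -(P *ᵥ x) := by
      have h2 : P *ᵥ x = U *ᵥ (-(P *ᵥ x)) := by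
        rw [Matrix.mulVec_neg, hUx, neg_neg]
      calc Matrix.conjTranspose U *ᵥ (P *ᵥ x)
          = Matrix.conjTranspose U *ᵥ (U *ᵥ (-(P *ᵥ x))) := by rw [← h2]
        _ = (Matrix.conjTranspose U * U) *ᵥ (-(P *ᵥ x)) := by
            rw [Matrix.mulVec_mulVec]
        _ = -(P *ᵥ x) := by rw [hU1, Matrix.one_mulVec]
    rw [Matrix.add_mulVec, Matrix.one_mulVec, hUs]
    simp
  have := congrArg Matrix.conjTranspose hstar
  simpa [Matrix.conjTranspose_mul, Matrix.conjTranspose_add, hHerm.eq] using this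

/-- Proposition 5.2 (vertex scattering matrix behaviour): for a unitary coupling
matrix `U` and a diagonal matrix `Λ`, the matrices
`M_n = (U − I) + 2πn(U + I) − i(U + I)Λ` are invertible for large `n`, and the
scattering matrices `σ_n = −M_n⁻¹((U − I) − 2πn(U + I) + i(U + I)Λ)` converge to
`I − 2P`, where `P` is the orthogonal projection onto `ker(U + I)`, the
eigenspace of `U` for the eigenvalue `−1`. -/
theorem stmt4 (d : ℕ) (hd : 1 ≤ d) (U Λ : Matrix (Fin d) (Fin d) ℂ)
    (hU : U ∈ Matrix.unitaryGroup (Fin d) ℂ) (hΛ : Λ.IsDiag) :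
    (∃ n₀ : ℕ, ∀ n : ℕ, n₀ ≤ n →
      IsUnit ((U - 1) + ((2 * Real.pi * n : ℝ) : ℂ) • (U + 1)
        - Complex.I • ((U + 1) * Λ))) ∧
    ∃ P : Matrix (Fin d) (Fin d) ℂ, P.IsHermitian ∧ P * P = P ∧
      LinearMap.range P.mulVecLin = LinearMap.ker (U + 1).mulVecLin ∧
      Tendsto (fun n : ℕ =>
          -((U - 1) + ((2 * Real.pi * n : ℝ) : ℂ) • (U + 1)
              - Complex.I • ((U + 1) * Λ))⁻¹
            * ((U - 1) - ((2 * Real.pi * n : ℝ) : ℂ) • (U + 1)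
              + Complex.I • ((U + 1) * Λ)))
        atTop (nhds (1 - (2 : ℂ) • P)) := by
  classical
  obtain ⟨P, hHerm, hPP, hAP, hPA, hfix⟩ := auxP d U hU
  set A : Matrix (Fin d) (Fin d) ℂ := U + 1 with hA
  set C : Matrix (Fin d) (Fin d) ℂ := (U - 1) - Complex.I • (A * Λ) with hC
  set c : ℕ → ℂ := fun n => ((2 * Real.pi * n : ℝ) : ℂ) with hcdef
  set s : ℕ → ℂ := fun n => (c n)⁻¹ with hsdef
  -- basic rewriting of M and N
  have hMeq : ∀ n : ℕ, (U - 1) + c n • (U + 1) - Complex.I • ((U + 1) * Λ)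
      = C + c n • A := by
    intro n; rw [hC, hA]; ext i j; simp; ring
  have hNeq : ∀ n : ℕ, (U - 1) - c n • (U + 1) + Complex.I • ((U + 1) * Λ)
      = (C + c n • A) - (2 * c n) • A + (2 * Complex.I) • (A * Λ) := by
    intro n; rw [hC, hA]; ext i j; simp; ring
  -- c n nonzero for n ≥ 1
  have hcne : ∀ n : ℕ, 1 ≤ n → c n ≠ 0 := by
    intro n hn
    simp only [hcdef, ne_eq, Complex.ofReal_eq_zero]
    positivity
  have hsc : ∀ n : ℕ, 1 ≤ n → s n * c n = 1 := fun n hn => inv_mul_cancel₀ (hcne n hn)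
  have hcs : ∀ n : ℕ, 1 ≤ n → c n * s n = 1 := fun n hn => mul_inv_cancel₀ (hcne n hn)
  -- matrix relations
  have hPC : P * C = (-2 : ℂ) • P := by
    have hPU : P * U = -P := by
      have : P * (U + 1) = P * U + P := by rw [mul_add, mul_one]
      rw [hPA] at this
      exact eq_neg_of_add_eq_zero_left this.symm
    rw [hC, mul_sub, mul_smul_comm, ← Matrix.mul_assoc, hPA, Matrix.zero_mul, mul_sub,
      mul_one, hPU]
    ext i j; simp; ring
  -- B = A + P invertible
  have hPB : P * (A + P) = P := by rw [mul_add, hPA, hPP, zero_add]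
  have hBP : (A + P) * P = P := by rw [add_mul, hAP, hPP, zero_add]
  have hBunit : IsUnit (A + P) := by
    rw [← Matrix.mulVec_injective_iff_isUnit, ← Matrix.coe_mulVecLin,
      ← LinearMap.ker_eq_bot, Matrix.ker_mulVecLin_eq_bot_iff]
    intro x hx
    have hPx : P *ᵥ x = 0 := by
      have := congrArg (fun v => P *ᵥ v) hx
      simpa [Matrix.mulVec_mulVec, hPB] using this
    have hAx : A *ᵥ x = 0 := by
      have := hx
      rw [Matrix.add_mulVec, hPx, add_zero] at this
      exact this
    have := hfix x hAx
    rw [hPx] at this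
    exact this.symm
  set Bi : Matrix (Fin d) (Fin d) ℂ := (A + P)⁻¹ with hBi
  have hBdet : IsUnit (A + P).det := (Matrix.isUnit_iff_isUnit_det _).mp hBunit
  have hBBi : (A + P) * Bi = 1 := Matrix.mul_nonsing_inv _ hBdet
  have hBiB : Bi * (A + P) = 1 := Matrix.nonsing_inv_mul _ hBdet
  have hBiP : Bi * P = P := by
    conv_lhs => rw [← hBP]
    rw [← Matrix.mul_assoc, hBiB, one_mul]
  have hPBi : P * Bi = P := by
    conv_lhs => rw [← hPB]
    rw [Matrix.mul_assoc, hBBi, mul_one]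
  have hBiA : Bi * A = 1 - P := by
    have : Bi * (A + P) = Bi * A + Bi * P := by rw [mul_add]
    rw [hBiB, hBiP] at this
    exact eq_sub_of_add_eq this.symm
  have hABi : A * Bi = 1 - P := by
    have : (A + P) * Bi = A * Bi + P * Bi := by rw [add_mul]
    rw [hBBi, hPBi] at this
    exact eq_sub_of_add_eq this.symm
  -- assoc-right forms
  have hPP' : ∀ M, P * (P * M) = P * M := fun M => by rw [← Matrix.mul_assoc, hPP]
  have hPA' : ∀ M, P * (A * M) = 0 := fun M => by
    rw [← Matrix.mul_assoc, hPA, Matrix.zero_mul]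
  have hAP' : ∀ M, A * (P * M) = 0 := fun M => by
    rw [← Matrix.mul_assoc, hAP, Matrix.zero_mul]
  have hPC' : ∀ M, P * (C * M) = (-2 : ℂ) • (P * M) := fun M => by
    rw [← Matrix.mul_assoc, hPC, Matrix.smul_mul]
  have hBiP' : ∀ M, Bi * (P * M) = P * M := fun M => by
    rw [← Matrix.mul_assoc, hBiP]
  have hPBi' : ∀ M, P * (Bi * M) = P * M := fun M => by
    rw [← Matrix.mul_assoc, hPBi]
  have hBiA' : ∀ M, Bi * (A * M) = M - P * M := fun M => by
    rw [← Matrix.mul_assoc, hBiA, Matrix.sub_mul, one_mul]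
  have hABi' : ∀ M, A * (Bi * M) = M - P * M := fun M => by
    rw [← Matrix.mul_assoc, hABi, Matrix.sub_mul, one_mul]
  -- key matrices
  set Q : Matrix (Fin d) (Fin d) ℂ := 1 - P with hQ
  set X : Matrix (Fin d) (Fin d) ℂ := (Bi - P) * C * Q with hX
  set L : Matrix (Fin d) (Fin d) ℂ := (-(2:ℂ)) • P + Q * C * P + Q with hL
  set Li : Matrix (Fin d) (Fin d) ℂ := (-(1/2 : ℂ)) • P + (1/2 : ℂ) • (Q * C * P) + Q
    with hLi
  set Y : ℕ → Matrix (Fin d) (Fin d) ℂ := fun n => 1 + s n • X with hY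
  set W : ℕ → Matrix (Fin d) (Fin d) ℂ := fun n => P + s n • (Bi - P) with hW
  have hLLi : L * Li = 1 := by
    rw [hL, hLi, hQ]
    simp only [mul_add, add_mul, sub_mul, mul_sub, smul_mul_assoc, mul_smul_comm, smul_smul,
      Matrix.mul_assoc, mul_one, one_mul, hPP, hPC, hPP', hPC', smul_sub, smul_add, Matrix.mul_zero, Matrix.zero_mul, smul_zero, zero_smul, add_zero, zero_add, sub_zero, neg_zero, mul_zero, zero_mul]
    module
  have hLiL : Li * L = 1 := mul_eq_one_comm.mp hLLi
  -- factorization of M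
  have hfact : ∀ n : ℕ, 1 ≤ n → C + c n • A = L * ((c n • A + P) * Y n) := by
    intro n hn
    have h1 : (c n • A + P) * Y n = c n • A + P + (1 - P) * C * (1 - P) := by
      rw [hY, hX, hQ]
      simp only [mul_add, add_mul, sub_mul, mul_sub, smul_mul_assoc, mul_smul_comm, smul_smul,
        Matrix.mul_assoc, mul_one, one_mul, hPP, hPC, hPP', hPC', hPA, hPA', hAP, hAP',
        hBiP, hBiP', hPBi, hPBi', hBiA', hABi', smul_sub, smul_add,
        mul_inv_cancel₀ (hcne n hn), inv_mul_cancel₀ (hcne n hn),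
        one_smul, zero_sub, Matrix.mul_zero, Matrix.zero_mul, smul_zero, zero_smul, add_zero, zero_add, sub_zero, neg_zero, mul_zero, zero_mul]
      match_scalars <;> grind [hsc n hn, hcs n hn]
    rw [h1, hL, hQ]
    simp only [mul_add, add_mul, sub_mul, mul_sub, smul_mul_assoc, mul_smul_comm, smul_smul,
      Matrix.mul_assoc, mul_one, one_mul, hPP, hPC, hPP', hPC', hPA, hPA', hAP, hAP',
      smul_sub, smul_add, Matrix.mul_zero, Matrix.zero_mul, smul_zero, zero_smul, add_zero, zero_add, sub_zero, neg_zero, mul_zero, zero_mul]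
    module
  have hWinv : ∀ n : ℕ, 1 ≤ n → (c n • A + P) * W n = 1 := by
    intro n hn
    rw [hW]
    simp only [mul_add, add_mul, sub_mul, mul_sub, smul_mul_assoc, mul_smul_comm, smul_smul,
      Matrix.mul_assoc, mul_one, one_mul, hPP, hPA, hAP, hBiP, hPBi, hBiA, hABi,
      mul_inv_cancel₀ (hcne n hn), inv_mul_cancel₀ (hcne n hn),
      one_smul, smul_sub, smul_add, Matrix.mul_zero, Matrix.zero_mul, smul_zero, zero_smul, add_zero, zero_add, sub_zero, neg_zero, mul_zero, zero_mul]
    match_scalars <;> grind [hsc n hn, hcs n hn]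
  have hLiA : Li * A = A := by
    rw [hLi, hQ]
    simp only [add_mul, sub_mul, smul_mul_assoc, Matrix.mul_assoc, one_mul,
      hPA, hPA', mul_smul_comm, Matrix.mul_zero, Matrix.zero_mul, smul_zero, zero_smul, add_zero, zero_add, sub_zero, neg_zero, mul_zero, zero_mul]
  have hWA : ∀ n : ℕ, W n * A = s n • Q := by
    intro n
    rw [hW, hQ]
    simp only [add_mul, sub_mul, smul_mul_assoc, hPA, hBiA, one_mul, Matrix.mul_zero, Matrix.zero_mul, smul_zero, zero_smul, add_zero, zero_add, sub_zero, neg_zero, mul_zero, zero_mul]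
    rw [hQ]
  -- convergence of Y
  have hslim : Tendsto s atTop (nhds 0) := by
    rw [hsdef, hcdef]
    have h1 : Tendsto (fun n : ℕ => (2 * Real.pi * n : ℝ)) atTop atTop := by
      apply Tendsto.const_mul_atTop (by positivity : (0:ℝ) < 2 * Real.pi)
      exact tendsto_natCast_atTop_atTop
    have h2 : Tendsto (fun n : ℕ => (2 * Real.pi * n : ℝ)⁻¹) atTop (nhds 0) :=
      h1.inv_tendsto_atTop
    have h3 : Tendsto (fun n : ℕ => Complex.ofReal ((2 * Real.pi * n : ℝ)⁻¹)) atTop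
        (nhds (Complex.ofReal 0)) := (Complex.continuous_ofReal.tendsto _).comp h2
    rw [Complex.ofReal_zero] at h3
    refine h3.congr fun n => ?_
    rw [Complex.ofReal_inv]
  have hYlim : Tendsto Y atTop (nhds 1) := by
    have : Tendsto (fun n => s n • X) atTop (nhds ((0 : ℂ) • X)) := hslim.smul_const X
    rw [zero_smul] at this
    simpa [hY] using (tendsto_const_nhds.add this : Tendsto (fun n => 1 + s n • X) atTop
      (nhds (1 + 0)))
  have hdetlim : Tendsto (fun n => (Y n).det) atTop (nhds 1) := by
    have : Tendsto (fun n => (Y n).det) atTop (nhds (Matrix.det 1)) :=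
      (Continuous.matrix_det continuous_id).continuousAt.tendsto.comp hYlim
    simpa using this
  have hdetne : ∀ᶠ n in atTop, (Y n).det ≠ 0 := hdetlim.eventually_ne one_ne_zero
  have hYinvlim : Tendsto (fun n => (Y n)⁻¹) atTop (nhds 1) := by
    have hcont : ContinuousAt Inv.inv (1 : Matrix (Fin d) (Fin d) ℂ) := by
      apply continuousAt_matrix_inv
      rw [Matrix.det_one]
      rw [Ring.inverse_eq_inv']
      exact continuousAt_inv₀ one_ne_zero
    have := hcont.tendsto.comp hYlim
    simpa [Function.comp_def] using this
  -- invertibility of M for large n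
  have hMunit : ∀ n : ℕ, 1 ≤ n → (Y n).det ≠ 0 →
      (C + c n • A) * ((Y n)⁻¹ * (W n * Li)) = 1 := by
    intro n hn hdet
    have hYYi : Y n * (Y n)⁻¹ = 1 := Matrix.mul_nonsing_inv _ (Ne.isUnit hdet)
    rw [hfact n hn]
    simp only [Matrix.mul_assoc]
    rw [← Matrix.mul_assoc (Y n), hYYi, one_mul, ← Matrix.mul_assoc (c n • A + P),
      hWinv n hn, one_mul, hLLi]
  obtain ⟨n₀, hn₀⟩ := (eventually_atTop).mp hdetne
  set m₀ : ℕ := max n₀ 1 with hm₀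
  have hkey : ∀ n : ℕ, m₀ ≤ n → (C + c n • A) * ((Y n)⁻¹ * (W n * Li)) = 1 := by
    intro n hn
    exact hMunit n (le_trans (le_max_right _ _) hn) (hn₀ n (le_trans (le_max_left _ _) hn))
  constructor
  · refine ⟨m₀, fun n hn => ?_⟩
    rw [hMeq n]
    rw [Matrix.isUnit_iff_isUnit_det]
    refine IsUnit.of_mul_eq_one ((Y n)⁻¹ * (W n * Li)).det ?_
    rw [← Matrix.det_mul, hkey n hn, Matrix.det_one]
  refine ⟨P, hHerm, hPP, ?_, ?_⟩
  · -- range = ker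
    apply le_antisymm
    · rintro x ⟨y, rfl⟩
      simp only [LinearMap.mem_ker, Matrix.mulVecLin_apply]
      rw [Matrix.mulVec_mulVec, hAP, Matrix.zero_mulVec]
    · intro x hx
      simp only [LinearMap.mem_ker, Matrix.mulVecLin_apply] at hx
      exact ⟨x, hfix x hx⟩
  · -- the limit
    have hσ : ∀ n : ℕ, m₀ ≤ n →
        -((U - 1) + c n • (U + 1) - Complex.I • ((U + 1) * Λ))⁻¹
          * ((U - 1) - c n • (U + 1) + Complex.I • ((U + 1) * Λ))
        = -1 + (2:ℂ) • ((Y n)⁻¹ * Q) - (2 * Complex.I * s n) • ((Y n)⁻¹ * (Q * Λ)) := by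
      intro n hn
      have hn1 : 1 ≤ n := le_trans (le_max_right _ _) hn
      have hinv : ((U - 1) + c n • (U + 1) - Complex.I • ((U + 1) * Λ))⁻¹
          = (Y n)⁻¹ * (W n * Li) := by
        rw [hMeq n]
        exact Matrix.inv_eq_right_inv (hkey n hn)
      rw [hinv, hNeq n]
      have hGA : ((Y n)⁻¹ * (W n * Li)) * A = s n • ((Y n)⁻¹ * Q) := by
        rw [Matrix.mul_assoc, Matrix.mul_assoc, hLiA, hWA n, mul_smul_comm]
      have hGM : ((Y n)⁻¹ * (W n * Li)) * (C + c n • A) = 1 :=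
        mul_eq_one_comm.mp (hkey n hn)
      rw [neg_mul, mul_add, mul_sub, hGM, mul_smul_comm, mul_smul_comm,
        ← Matrix.mul_assoc _ A Λ, hGA, Matrix.smul_mul, Matrix.mul_assoc _ Q Λ,
        smul_smul, smul_smul, show 2 * c n * s n = 2 by rw [mul_assoc, hcs n hn1, mul_one]]
      module
    have h1 : Tendsto (fun n => (Y n)⁻¹ * Q) atTop (nhds Q) := by
      have hg : Continuous (fun Z : Matrix (Fin d) (Fin d) ℂ => Z * Q) :=
        Continuous.matrix_mul continuous_id continuous_const
      have := hg.continuousAt.tendsto.comp hYinvlim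
      simpa [Function.comp_def] using this
    have h3 : Tendsto (fun n => (Y n)⁻¹ * (Q * Λ)) atTop (nhds (Q * Λ)) := by
      have hg : Continuous (fun Z : Matrix (Fin d) (Fin d) ℂ => Z * (Q * Λ)) :=
        Continuous.matrix_mul continuous_id continuous_const
      have := hg.continuousAt.tendsto.comp hYinvlim
      simpa [Function.comp_def] using this
    have h2 : Tendsto (fun n => 2 * Complex.I * s n) atTop (nhds 0) := by
      have := hslim.const_mul (2 * Complex.I)
      simpa using this
    have h4 : Tendsto (fun n => (2 * Complex.I * s n) • ((Y n)⁻¹ * (Q * Λ))) atTop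
        (nhds ((0 : ℂ) • (Q * Λ))) := h2.smul h3
    rw [zero_smul] at h4
    have h5 : Tendsto (fun n => -1 + (2:ℂ) • ((Y n)⁻¹ * Q)
        - (2 * Complex.I * s n) • ((Y n)⁻¹ * (Q * Λ))) atTop
        (nhds (-1 + (2:ℂ) • Q - 0)) :=
      ((tendsto_const_nhds.add (h1.const_smul (2:ℂ))).sub h4)
    have hval : -1 + (2:ℂ) • Q - (0 : Matrix (Fin d) (Fin d) ℂ) = 1 - (2:ℂ) • P := by
      rw [hQ]; ext i j; simp; ring
    rw [hval] at h5
    apply h5.congr'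
    filter_upwards [eventually_ge_atTop m₀] with n hn
    exact (hσ n hn).symm
end

section
/- Let K ≥ 1, let c : {1,…,K} → ℂ, let C > 0 and n₀ ≥ 1, and suppose λ : {1,…,K} × {n₀, n₀+1, …} → ℂ satisfies |λ(s,n) − (2πin + c(s))| ≤ C/n for all s and all n ≥ n₀. For R > 0 set N(R) = #{(s,n) : n ≥ n₀, |Im λ(s,n)| < R} and, for an open interval I ⊆ ℝ, N_I(R) = #{(s,n) : n ≥ n₀, |Im λ(s,n)| < R, Re λ(s,n) ∈ I}. Let c₀ ∈ ℝ and ε > 0 be such that Re c(s) ≠ c₀ − ε and Re c(s) ≠ c₀ + ε for every s, and let m = #{s : c₀ − ε < Re c(s) < c₀ + ε}. Then lim_{R→∞} N_I(R)/N(R) = m/K for I = (c₀ − ε, c₀ + ε). -/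
open Filter Real Set

private lemma lim_aux {α D : ℝ} {g : ℝ → ℝ}
    (h : ∀ᶠ R in atTop, |g R - α * R| ≤ D) :
    Tendsto (fun R => g R / R) atTop (nhds α) := by
  have hD : Tendsto (fun R : ℝ => D / R) atTop (nhds 0) :=
    tendsto_const_nhds.div_atTop tendsto_id
  have hlow : Tendsto (fun R : ℝ => α - D / R) atTop (nhds α) := by
    simpa using tendsto_const_nhds.sub hD
  have hhigh : Tendsto (fun R : ℝ => α + D / R) atTop (nhds α) := by
    simpa using tendsto_const_nhds.add hD
  refine tendsto_of_tendsto_of_tendsto_of_le_of_le' hlow hhigh ?_ ?_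
  · filter_upwards [h, eventually_gt_atTop 0] with R hR hR0
    rw [le_div_iff₀ hR0, sub_mul, div_mul_cancel₀ _ hR0.ne']
    linarith [(abs_le.mp hR).1]
  · filter_upwards [h, eventually_gt_atTop 0] with R hR hR0
    rw [div_le_iff₀ hR0, add_mul, div_mul_cancel₀ _ hR0.ne']
    linarith [(abs_le.mp hR).2]

set_option maxHeartbeats 2000000 in
/-- The counting argument of Theorem 6.7(ii): if the eigenvalues split into `K`
sequences `λ(s,n) = 2πin + c(s) + O(1/n)`, then the asymptotic proportion of
eigenvalues with real part in the interval `(c₀ − ε, c₀ + ε)` (whose endpoints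
avoid all `Re c(s)`) equals `m/K`, where `m` is the number of sequences whose
constant term has real part in that interval. -/
theorem stmt7 (K : ℕ) (hK : 1 ≤ K) (c : Fin K → ℂ) (C : ℝ) (hC : 0 < C)
    (n₀ : ℕ) (hn₀ : 1 ≤ n₀) (lam : Fin K → ℕ → ℂ)
    (hlam : ∀ s : Fin K, ∀ n : ℕ, n₀ ≤ n →
      ‖lam s n - (((2 * π * n : ℝ) : ℂ) * Complex.I + c s)‖ ≤ C / n)
    (c₀ ε : ℝ) (hε : 0 < ε)
    (hne : ∀ s : Fin K, (c s).re ≠ c₀ - ε ∧ (c s).re ≠ c₀ + ε) :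
    Tendsto (fun R : ℝ =>
        (({p : Fin K × ℕ | n₀ ≤ p.2 ∧ |(lam p.1 p.2).im| < R
            ∧ (lam p.1 p.2).re ∈ Set.Ioo (c₀ - ε) (c₀ + ε)}.ncard : ℝ))
        / ({p : Fin K × ℕ | n₀ ≤ p.2 ∧ |(lam p.1 p.2).im| < R}.ncard : ℝ))
      atTop
      (nhds (({s : Fin K | (c s).re ∈ Set.Ioo (c₀ - ε) (c₀ + ε)}.ncard : ℝ) / K)) := by
  classical
  have hπ : (0:ℝ) < 2 * π := by positivity
  have hne' : Nonempty (Fin K) := ⟨⟨0, hK⟩⟩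
  -- the finset of good sequence indices
  set Sf : Finset (Fin K) :=
    Finset.univ.filter (fun s => (c s).re ∈ Set.Ioo (c₀ - ε) (c₀ + ε)) with hSf
  have hSeq : {s : Fin K | (c s).re ∈ Set.Ioo (c₀ - ε) (c₀ + ε)} = ↑Sf := by
    ext s; simp [hSf]
  set m : ℕ := Sf.card with hm
  have hSm : ({s : Fin K | (c s).re ∈ Set.Ioo (c₀ - ε) (c₀ + ε)}).ncard = m := by
    rw [hSeq, Set.ncard_coe_finset]
  -- the constant M bounding the imaginary parts of the c's
  set M : ℝ := C + ∑ s, |(c s).im| with hM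
  have hMpos : 0 < M := by
    have : (0:ℝ) ≤ ∑ s, |(c s).im| := Finset.sum_nonneg fun t _ => abs_nonneg _
    rw [hM]; linarith
  have hMs : ∀ s : Fin K, |(c s).im| + C ≤ M := by
    intro s
    have h1 : |(c s).im| ≤ ∑ t, |(c t).im| :=
      Finset.single_le_sum (f := fun t => |(c t).im|) (fun t _ => abs_nonneg _)
        (Finset.mem_univ s)
    rw [hM]; linarith
  -- per-point estimates
  have hkey1 : ∀ s n, n₀ ≤ n → |(lam s n).im - (2*π*n + (c s).im)| ≤ C := by
    intro s n hn
    have h1 := hlam s n hn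
    have hn1 : (1:ℝ) ≤ n := by exact_mod_cast hn₀.trans hn
    have him : (lam s n - (((2 * π * n : ℝ) : ℂ) * Complex.I + c s)).im
        = (lam s n).im - (2*π*n + (c s).im) := by simp
    calc |(lam s n).im - (2*π*n + (c s).im)|
        = |(lam s n - (((2 * π * n : ℝ) : ℂ) * Complex.I + c s)).im| := by rw [him]
      _ ≤ ‖lam s n - (((2 * π * n : ℝ) : ℂ) * Complex.I + c s)‖ :=
          Complex.abs_im_le_norm _
      _ ≤ C / n := h1
      _ ≤ C := by
          rw [div_le_iff₀ (by linarith : (0:ℝ) < n)]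
          nlinarith
  have hkey2 : ∀ s n, n₀ ≤ n → |(lam s n).re - (c s).re| ≤ C / n := by
    intro s n hn
    have h1 := hlam s n hn
    have hre : (lam s n - (((2 * π * n : ℝ) : ℂ) * Complex.I + c s)).re
        = (lam s n).re - (c s).re := by simp
    calc |(lam s n).re - (c s).re|
        = |(lam s n - (((2 * π * n : ℝ) : ℂ) * Complex.I + c s)).re| := by rw [hre]
      _ ≤ ‖lam s n - (((2 * π * n : ℝ) : ℂ) * Complex.I + c s)‖ :=
          Complex.abs_re_le_norm _
      _ ≤ C / n := h1
  -- δ : distance of the Re c s to the endpoints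
  set δ : ℝ := Finset.univ.inf' Finset.univ_nonempty
      (fun s => min |(c s).re - (c₀-ε)| |(c s).re - (c₀+ε)|) with hδ
  have hδpos : 0 < δ := by
    rw [hδ, Finset.lt_inf'_iff]
    intro s _
    rw [lt_min_iff, abs_pos, abs_pos]
    exact ⟨sub_ne_zero.mpr (hne s).1, sub_ne_zero.mpr (hne s).2⟩
  have hδle : ∀ s, δ ≤ |(c s).re - (c₀-ε)| ∧ δ ≤ |(c s).re - (c₀+ε)| := by
    intro s
    have h1 : δ ≤ min |(c s).re - (c₀-ε)| |(c s).re - (c₀+ε)| := by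
      rw [hδ]; exact Finset.inf'_le _ (Finset.mem_univ s)
    exact ⟨h1.trans (min_le_left _ _), h1.trans (min_le_right _ _)⟩
  set n₁ : ℕ := max n₀ (⌈C/δ⌉₊ + 1) with hn₁
  have hn₁0 : n₀ ≤ n₁ := le_max_left _ _
  have hCδ : ∀ n : ℕ, n₁ ≤ n → C/(n:ℝ) < δ := by
    intro n hn
    have h1 : (⌈C/δ⌉₊ + 1 : ℕ) ≤ n := le_trans (le_max_right _ _) hn
    have h2 : C/δ < (n:ℝ) := by
      have h3 := Nat.le_ceil (C/δ)
      have h4 : ((⌈C/δ⌉₊ : ℕ) : ℝ) < n := by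
        exact_mod_cast Nat.lt_of_lt_of_le (Nat.lt_succ_self _) h1
      linarith
    have hCδpos : (0:ℝ) < C/δ := div_pos hC hδpos
    have hnpos : (0:ℝ) < n := hCδpos.trans h2
    rw [div_lt_iff₀ hnpos]
    rw [div_lt_iff₀ hδpos] at h2
    linarith
  -- for n ≥ n₁, membership of the real part in the interval matches Re c s
  have hRe : ∀ s n, n₁ ≤ n →
      ((lam s n).re ∈ Set.Ioo (c₀-ε) (c₀+ε) ↔ (c s).re ∈ Set.Ioo (c₀-ε) (c₀+ε)) := by
    intro s n hn
    have habs : |(lam s n).re - (c s).re| < δ :=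
      lt_of_le_of_lt (hkey2 s n (hn₁0.trans hn)) (hCδ n hn)
    obtain ⟨hs1, hs2⟩ := abs_sub_lt_iff.mp habs
    obtain ⟨hd1, hd2⟩ := hδle s
    constructor
    · rintro ⟨ha, hb⟩
      by_contra hcs
      have hcases : (c s).re ≤ c₀ - ε ∨ c₀ + ε ≤ (c s).re := by
        rcases not_and_or.mp hcs with h | h
        · exact Or.inl (not_lt.mp h)
        · exact Or.inr (not_lt.mp h)
      rcases hcases with h | h
      · have h' : (c s).re < c₀ - ε := lt_of_le_of_ne h (hne s).1
        rw [abs_of_neg (by linarith), neg_sub] at hd1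
        linarith
      · have h' : c₀ + ε < (c s).re := lt_of_le_of_ne h (Ne.symm (hne s).2)
        rw [abs_of_pos (by linarith)] at hd2
        linarith
    · rintro ⟨ha, hb⟩
      rw [abs_of_pos (by linarith)] at hd1
      rw [abs_of_neg (by linarith), neg_sub] at hd2
      exact ⟨by linarith, by linarith⟩
  -- counting sets
  set NE : ℝ → ℕ := fun R =>
    ({p : Fin K × ℕ | n₀ ≤ p.2 ∧ |(lam p.1 p.2).im| < R}).ncard with hNE
  set NI : ℝ → ℕ := fun R =>
    ({p : Fin K × ℕ | n₀ ≤ p.2 ∧ |(lam p.1 p.2).im| < R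
        ∧ (lam p.1 p.2).re ∈ Set.Ioo (c₀ - ε) (c₀ + ε)}).ncard with hNI
  set A : ℝ → ℕ := fun R => ⌈(R - M)/(2*π)⌉₊ with hA
  set B : ℝ → ℕ := fun R => ⌈(R + M)/(2*π)⌉₊ with hB
  -- imaginary part facts
  have hImUp : ∀ s n (R : ℝ), n₀ ≤ n → |(lam s n).im| < R → (n:ℝ) < (R + M)/(2*π) := by
    intro s n R hn hR
    have h1 := abs_le.mp (hkey1 s n hn)
    have h2 : (lam s n).im ≤ |(lam s n).im| := le_abs_self _
    have h3 : -|(c s).im| ≤ (c s).im := neg_abs_le _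
    have h4 := hMs s
    rw [lt_div_iff₀ hπ]
    nlinarith
  have hImDown : ∀ s n (R : ℝ), n₀ ≤ n → (n:ℝ) < (R - M)/(2*π) → |(lam s n).im| < R := by
    intro s n R hn hx
    have h1 := abs_le.mp (hkey1 s n hn)
    have h3 : (c s).im ≤ |(c s).im| := le_abs_self _
    have h3' : -|(c s).im| ≤ (c s).im := neg_abs_le _
    have h4 := hMs s
    have h5 : (0:ℝ) ≤ 2*π*n := by positivity
    rw [lt_div_iff₀ hπ] at hx
    rw [abs_lt]
    constructor <;> linarith
  -- set inclusions
  have hEsub : ∀ R : ℝ, {p : Fin K × ℕ | n₀ ≤ p.2 ∧ |(lam p.1 p.2).im| < R}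
      ⊆ (↑((Finset.univ : Finset (Fin K)) ×ˢ Finset.Ico n₀ (B R)) : Set (Fin K × ℕ)) := by
    rintro R ⟨s, n⟩ ⟨hn, hR⟩
    simp only [Finset.coe_product, Set.mem_prod, Finset.coe_univ, Set.mem_univ, true_and,
      Finset.coe_Ico, Set.mem_Ico]
    exact ⟨hn, Nat.lt_ceil.mpr (hImUp s n R hn hR)⟩
  have hEsup : ∀ R : ℝ, (↑((Finset.univ : Finset (Fin K)) ×ˢ Finset.Ico n₀ (A R)) : Set (Fin K × ℕ))
      ⊆ {p : Fin K × ℕ | n₀ ≤ p.2 ∧ |(lam p.1 p.2).im| < R} := by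
    rintro R ⟨s, n⟩ hmem
    simp only [Finset.coe_product, Set.mem_prod, Finset.coe_univ, Set.mem_univ, true_and,
      Finset.coe_Ico, Set.mem_Ico] at hmem
    exact ⟨hmem.1, hImDown s n R hmem.1 (Nat.lt_ceil.mp hmem.2)⟩
  have hIsub : ∀ R : ℝ, {p : Fin K × ℕ | n₀ ≤ p.2 ∧ |(lam p.1 p.2).im| < R
        ∧ (lam p.1 p.2).re ∈ Set.Ioo (c₀ - ε) (c₀ + ε)}
      ⊆ (↑(Sf ×ˢ Finset.Ico n₀ (B R)) : Set (Fin K × ℕ))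
        ∪ (↑((Finset.univ : Finset (Fin K)) ×ˢ Finset.Ico n₀ n₁) : Set (Fin K × ℕ)) := by
    rintro R ⟨s, n⟩ ⟨hn, hR, hre⟩
    by_cases h1 : n₁ ≤ n
    · left
      simp only [Finset.coe_product, Set.mem_prod, Finset.coe_Ico, Set.mem_Ico,
        Finset.mem_coe]
      refine ⟨?_, hn, Nat.lt_ceil.mpr (hImUp s n R hn hR)⟩
      rw [hSf, Finset.mem_filter]
      exact ⟨Finset.mem_univ s, (hRe s n h1).mp hre⟩
    · right
      simp only [Finset.coe_product, Set.mem_prod, Finset.coe_univ, Set.mem_univ, true_and,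
        Finset.coe_Ico, Set.mem_Ico]
      exact ⟨hn, not_le.mp h1⟩
  have hIsup : ∀ R : ℝ, (↑(Sf ×ˢ Finset.Ico n₁ (A R)) : Set (Fin K × ℕ))
      ⊆ {p : Fin K × ℕ | n₀ ≤ p.2 ∧ |(lam p.1 p.2).im| < R
        ∧ (lam p.1 p.2).re ∈ Set.Ioo (c₀ - ε) (c₀ + ε)} := by
    rintro R ⟨s, n⟩ hmem
    simp only [Finset.coe_product, Set.mem_prod, Finset.coe_Ico, Set.mem_Ico,
      Finset.mem_coe] at hmem
    obtain ⟨hs, hn1, hnA⟩ := hmem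
    have hn : n₀ ≤ n := hn₁0.trans hn1
    refine ⟨hn, hImDown s n R hn (Nat.lt_ceil.mp hnA), ?_⟩
    rw [hRe s n hn1]
    rw [hSf, Finset.mem_filter] at hs
    exact hs.2
  -- cardinality bounds (ℕ level)
  have hNEle : ∀ R : ℝ, NE R ≤ K * (B R - n₀) := by
    intro R
    calc NE R ≤ (↑((Finset.univ : Finset (Fin K)) ×ˢ Finset.Ico n₀ (B R)) : Set (Fin K × ℕ)).ncard :=
          Set.ncard_le_ncard (hEsub R) (Finset.finite_toSet _)
      _ = K * (B R - n₀) := by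
          rw [Set.ncard_coe_finset, Finset.card_product, Finset.card_univ,
            Fintype.card_fin, Nat.card_Ico]
  have hNEge : ∀ R : ℝ, K * (A R - n₀) ≤ NE R := by
    intro R
    have hfin : ({p : Fin K × ℕ | n₀ ≤ p.2 ∧ |(lam p.1 p.2).im| < R}).Finite :=
      Set.Finite.subset (Finset.finite_toSet _) (hEsub R)
    calc K * (A R - n₀)
        = (↑((Finset.univ : Finset (Fin K)) ×ˢ Finset.Ico n₀ (A R)) : Set (Fin K × ℕ)).ncard := by
          rw [Set.ncard_coe_finset, Finset.card_product, Finset.card_univ,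
            Fintype.card_fin, Nat.card_Ico]
      _ ≤ NE R := Set.ncard_le_ncard (hEsup R) hfin
  have hNIle : ∀ R : ℝ, NI R ≤ m * (B R - n₀) + K * n₁ := by
    intro R
    calc NI R ≤ ((↑(Sf ×ˢ Finset.Ico n₀ (B R)) : Set (Fin K × ℕ))
          ∪ ↑((Finset.univ : Finset (Fin K)) ×ˢ Finset.Ico n₀ n₁)).ncard :=
          Set.ncard_le_ncard (hIsub R)
            (Set.Finite.union (Finset.finite_toSet _) (Finset.finite_toSet _))
      _ ≤ (↑(Sf ×ˢ Finset.Ico n₀ (B R)) : Set (Fin K × ℕ)).ncard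
          + (↑((Finset.univ : Finset (Fin K)) ×ˢ Finset.Ico n₀ n₁) : Set (Fin K × ℕ)).ncard :=
          Set.ncard_union_le _ _
      _ ≤ m * (B R - n₀) + K * n₁ := by
          rw [Set.ncard_coe_finset, Set.ncard_coe_finset, Finset.card_product,
            Finset.card_product, Finset.card_univ, Fintype.card_fin, Nat.card_Ico,
            Nat.card_Ico]
          exact Nat.add_le_add_left (Nat.mul_le_mul_left K (Nat.sub_le n₁ n₀)) _
  have hNIge : ∀ R : ℝ, m * (A R - n₁) ≤ NI R := by
    intro R
    have hfin : ({p : Fin K × ℕ | n₀ ≤ p.2 ∧ |(lam p.1 p.2).im| < R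
        ∧ (lam p.1 p.2).re ∈ Set.Ioo (c₀ - ε) (c₀ + ε)}).Finite := by
      refine Set.Finite.subset (Set.Finite.subset (Finset.finite_toSet
        ((Finset.univ : Finset (Fin K)) ×ˢ Finset.Ico n₀ (B R))) (hEsub R)) ?_
      rintro ⟨s, n⟩ ⟨h1, h2, _⟩; exact ⟨h1, h2⟩
    calc m * (A R - n₁)
        = (↑(Sf ×ˢ Finset.Ico n₁ (A R)) : Set (Fin K × ℕ)).ncard := by
          rw [Set.ncard_coe_finset, Finset.card_product, Nat.card_Ico]
      _ ≤ NI R := Set.ncard_le_ncard (hIsup R) hfin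
  -- real-valued asymptotics
  have hKR : (0:ℝ) ≤ K := Nat.cast_nonneg K
  have hmR : (0:ℝ) ≤ m := Nat.cast_nonneg m
  have hNElim : Tendsto (fun R => ((NE R : ℝ))/R) atTop (nhds ((K:ℝ)/(2*π))) := by
    apply lim_aux (D := (K:ℝ)*(M/(2*π) + n₀ + 1))
    filter_upwards [eventually_ge_atTop (M+1)] with R hR
    have hx0 : (0:ℝ) ≤ (R + M)/(2*π) := by
      apply div_nonneg _ hπ.le; linarith
    have hub : ((NE R : ℝ)) ≤ (K:ℝ) * ((R + M)/(2*π) + 1) := by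
      have h1 : ((NE R : ℝ)) ≤ (K:ℝ) * ((B R - n₀ : ℕ) : ℝ) := by
        exact_mod_cast Nat.cast_le.mpr (hNEle R)
      have h2 : (((B R - n₀ : ℕ)) : ℝ) ≤ (B R : ℝ) := by
        exact_mod_cast Nat.sub_le _ _
      have h3 : (B R : ℝ) < (R + M)/(2*π) + 1 := by
        rw [hB]; exact Nat.ceil_lt_add_one hx0
      nlinarith
    have hlb : (K:ℝ) * ((R - M)/(2*π) - n₀) ≤ ((NE R : ℝ)) := by
      have h1 : (K:ℝ) * ((A R - n₀ : ℕ) : ℝ) ≤ ((NE R : ℝ)) := by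
        exact_mod_cast Nat.cast_le.mpr (hNEge R)
      have h2 : (R - M)/(2*π) - n₀ ≤ ((A R - n₀ : ℕ) : ℝ) := by
        have h3 : (R - M)/(2*π) ≤ (A R : ℝ) := by rw [hA]; exact Nat.le_ceil _
        have h4 : (A R : ℝ) - n₀ ≤ ((A R - n₀ : ℕ) : ℝ) := by
          rcases le_or_gt n₀ (A R) with h | h
          · rw [Nat.cast_sub h]
          · have := Nat.cast_le (α := ℝ).mpr h.le
            have h5 : ((A R - n₀ : ℕ) : ℝ) = ((A R - n₀ : ℕ) : ℝ) := rfl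
            have h6 : A R - n₀ = 0 := Nat.sub_eq_zero_of_le h.le
            rw [h6]; push_cast
            have := Nat.cast_lt (α := ℝ).mpr h
            linarith
        linarith
      nlinarith
    rw [abs_le]
    have e1 : (K:ℝ) * ((R + M)/(2*π) + 1) = (K:ℝ)/(2*π)*R + ((K:ℝ)*M/(2*π) + K) := by
      ring
    have e2 : (K:ℝ) * ((R - M)/(2*π) - n₀) = (K:ℝ)/(2*π)*R - ((K:ℝ)*M/(2*π) + (K:ℝ)*n₀) := by
      ring
    have e3 : (K:ℝ)*(M/(2*π) + n₀ + 1) = (K:ℝ)*M/(2*π) + (K:ℝ)*n₀ + K := by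
      ring
    have h7 : (0:ℝ) ≤ (K:ℝ)*n₀ := by positivity
    constructor <;> linarith
  have hNIlim : Tendsto (fun R => ((NI R : ℝ))/R) atTop (nhds ((m:ℝ)/(2*π))) := by
    apply lim_aux (D := (m:ℝ)*(M/(2*π) + n₁ + 1) + (K:ℝ)*n₁)
    filter_upwards [eventually_ge_atTop (M+1)] with R hR
    have hx0 : (0:ℝ) ≤ (R + M)/(2*π) := by
      apply div_nonneg _ hπ.le; linarith
    have hub : ((NI R : ℝ)) ≤ (m:ℝ) * ((R + M)/(2*π) + 1) + (K:ℝ)*n₁ := by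
      have h1 : ((NI R : ℝ)) ≤ (m:ℝ) * ((B R - n₀ : ℕ) : ℝ) + (K:ℝ)*n₁ := by
        exact_mod_cast Nat.cast_le.mpr (hNIle R)
      have h2 : (((B R - n₀ : ℕ)) : ℝ) ≤ (B R : ℝ) := by
        exact_mod_cast Nat.sub_le _ _
      have h3 : (B R : ℝ) < (R + M)/(2*π) + 1 := by
        rw [hB]; exact Nat.ceil_lt_add_one hx0
      nlinarith
    have hlb : (m:ℝ) * ((R - M)/(2*π) - n₁) ≤ ((NI R : ℝ)) := by
      have h1 : (m:ℝ) * ((A R - n₁ : ℕ) : ℝ) ≤ ((NI R : ℝ)) := by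
        exact_mod_cast Nat.cast_le.mpr (hNIge R)
      have h2 : (R - M)/(2*π) - n₁ ≤ ((A R - n₁ : ℕ) : ℝ) := by
        have h3 : (R - M)/(2*π) ≤ (A R : ℝ) := by rw [hA]; exact Nat.le_ceil _
        have h4 : (A R : ℝ) - n₁ ≤ ((A R - n₁ : ℕ) : ℝ) := by
          rcases le_or_gt n₁ (A R) with h | h
          · rw [Nat.cast_sub h]
          · have h6 : A R - n₁ = 0 := Nat.sub_eq_zero_of_le h.le
            rw [h6]; push_cast
            have := Nat.cast_lt (α := ℝ).mpr h
            linarith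
        linarith
      nlinarith
    rw [abs_le]
    have e1 : (m:ℝ) * ((R + M)/(2*π) + 1) + (K:ℝ)*n₁
        = (m:ℝ)/(2*π)*R + ((m:ℝ)*M/(2*π) + m + (K:ℝ)*n₁) := by
      ring
    have e2 : (m:ℝ) * ((R - M)/(2*π) - n₁)
        = (m:ℝ)/(2*π)*R - ((m:ℝ)*M/(2*π) + (m:ℝ)*n₁) := by
      ring
    have e3 : (m:ℝ)*(M/(2*π) + n₁ + 1) + (K:ℝ)*n₁
        = (m:ℝ)*M/(2*π) + (m:ℝ)*n₁ + m + (K:ℝ)*n₁ := by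
      ring
    have h7 : (0:ℝ) ≤ (m:ℝ)*n₁ := by positivity
    have h8 : (0:ℝ) ≤ (K:ℝ)*n₁ := by positivity
    constructor <;> linarith
  -- combine
  have hKpos : (0:ℝ) < (K:ℝ)/(2*π) := by
    apply div_pos _ hπ
    exact_mod_cast Nat.lt_of_lt_of_le Nat.zero_lt_one hK
  have hdiv : Tendsto (fun R => (((NI R : ℝ))/R) / (((NE R : ℝ))/R)) atTop
      (nhds (((m:ℝ)/(2*π)) / ((K:ℝ)/(2*π)))) := hNIlim.div hNElim hKpos.ne'
  have hval : ((m:ℝ)/(2*π)) / ((K:ℝ)/(2*π)) = (m:ℝ)/(K:ℝ) :=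
    div_div_div_cancel_right₀ hπ.ne' _ _
  rw [hval] at hdiv
  have hcongr : (fun R => (((NI R : ℝ))/R) / (((NE R : ℝ))/R))
      =ᶠ[atTop] (fun R => ((NI R : ℝ)) / ((NE R : ℝ))) := by
    filter_upwards [eventually_gt_atTop (0:ℝ)] with R hR
    rw [div_div_div_cancel_right₀ hR.ne' _ _]
  have hmain := hdiv.congr' hcongr
  rw [hSm]
  exact hmain
end

section
/- Let a : [0,1] → ℝ be continuously differentiable and b : [0,1] → ℝ be continuous. Then there exist constants C > 0 and R > 0 such that for every λ ∈ ℂ with Im λ ≥ R there exist twice continuously differentiable functions u₊, u₋ : [0,1] → ℂ satisfying u_±''(x) = (λ² + 2λ a(x) − b(x)) u_±(x) for all x ∈ [0,1], u_±(0) = 1, and |u_±(x) · exp(∓λx ∓ ∫_0^x a(t) dt) − 1| ≤ C/|λ| for all x ∈ [0,1]. -/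
open MeasureTheory intervalIntegral Set

noncomputable section
namespace Stmt8Aux

lemma ftcC {f : ℝ → ℂ} (hf : Continuous f) (x : ℝ) :
    HasDerivAt (fun y => ∫ t in (0:ℝ)..y, f t) (f x) x :=
  intervalIntegral.integral_hasDerivAt_right (hf.intervalIntegrable 0 x)
    hf.stronglyMeasurable.stronglyMeasurableAtFilter hf.continuousAt

lemma ftcR {f : ℝ → ℝ} (hf : Continuous f) (x : ℝ) :
    HasDerivAt (fun y => ∫ t in (0:ℝ)..y, f t) (f x) x :=
  intervalIntegral.integral_hasDerivAt_right (hf.intervalIntegrable 0 x)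
    hf.stronglyMeasurable.stronglyMeasurableAtFilter hf.continuousAt

def AA (a : ℝ → ℝ) (x : ℝ) : ℝ := ∫ t in (0:ℝ)..x, a t

lemma hasDerivAt_AA {a : ℝ → ℝ} (ha : Continuous a) (x : ℝ) :
    HasDerivAt (AA a) (a x) x := ftcR ha x

lemma continuous_AA {a : ℝ → ℝ} (ha : Continuous a) : Continuous (AA a) :=
  continuous_iff_continuousAt.2 fun x => (hasDerivAt_AA ha x).continuousAt

lemma AA_zero (a : ℝ → ℝ) : AA a 0 = 0 := intervalIntegral.integral_same

def nn (a : ℝ → ℝ) (μ : ℂ) (ψ : ℝ → ℂ) (t : ℝ) : ℂ :=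
  Complex.exp (2*μ*t + 2*((AA a t : ℝ):ℂ)) * ψ t

def FF (a : ℝ → ℝ) (μ : ℂ) (ψ : ℝ → ℂ) (s : ℝ) : ℂ := ∫ t in (0:ℝ)..s, nn a μ ψ t

def mm (a : ℝ → ℝ) (μ : ℂ) (ψ : ℝ → ℂ) (s : ℝ) : ℂ :=
  Complex.exp (-(2*μ*s) - 2*((AA a s : ℝ):ℂ)) * FF a μ ψ s

def II (a : ℝ → ℝ) (μ : ℂ) (ψ : ℝ → ℂ) (x : ℝ) : ℂ := ∫ s in (0:ℝ)..x, mm a μ ψ s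

variable {a : ℝ → ℝ} {μ : ℂ} {ψ : ℝ → ℂ}

lemma continuous_nn (ha : Continuous a) (hψ : Continuous ψ) : Continuous (nn a μ ψ) := by
  have hA := continuous_AA ha
  exact (Complex.continuous_exp.comp (by fun_prop)).mul hψ

lemma hasDerivAt_FF (ha : Continuous a) (hψ : Continuous ψ) (s : ℝ) :
    HasDerivAt (FF a μ ψ) (nn a μ ψ s) s := ftcC (continuous_nn ha hψ) s

lemma continuous_FF (ha : Continuous a) (hψ : Continuous ψ) : Continuous (FF a μ ψ) :=
  continuous_iff_continuousAt.2 fun x => (hasDerivAt_FF ha hψ x).continuousAt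

lemma continuous_mm (ha : Continuous a) (hψ : Continuous ψ) : Continuous (mm a μ ψ) := by
  have hA := continuous_AA ha
  exact (Complex.continuous_exp.comp (by fun_prop)).mul (continuous_FF ha hψ)

lemma hasDerivAt_mm (ha : Continuous a) (hψ : Continuous ψ) (s : ℝ) :
    HasDerivAt (mm a μ ψ) ((-(2*μ) - 2*((a s : ℝ):ℂ)) * mm a μ ψ s + ψ s) s := by
  have hexp : HasDerivAt (fun s : ℝ => Complex.exp (-(2*μ*s) - 2*((AA a s : ℝ):ℂ)))
      (Complex.exp (-(2*μ*s) - 2*((AA a s : ℝ):ℂ)) * (-(2*μ) - 2*((a s : ℝ):ℂ))) s := by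
    have h1 : HasDerivAt (fun s : ℝ => -(2*μ*(s:ℂ)) - 2*((AA a s : ℝ):ℂ))
        (-(2*μ) - 2*((a s : ℝ):ℂ)) s := by
      have hμ : HasDerivAt (fun s : ℝ => 2*μ*(s:ℂ)) (2*μ) s := by
        simpa using (Complex.ofRealCLM.hasDerivAt.const_mul (2*μ) : HasDerivAt _ _ s)
      have hA : HasDerivAt (fun s : ℝ => ((AA a s : ℝ):ℂ)) ((a s : ℝ):ℂ) s :=
        (hasDerivAt_AA ha s).ofReal_comp
      exact (hμ.neg.sub (hA.const_mul 2))
    exact h1.cexp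
  have := hexp.mul (hasDerivAt_FF (μ := μ) ha hψ s)
  refine this.congr_deriv (Eq.symm ?_)
  have hcancel : Complex.exp (-(2*μ*s) - 2*((AA a s : ℝ):ℂ)) * nn a μ ψ s = ψ s := by
    unfold nn
    rw [← mul_assoc, ← Complex.exp_add]
    have : -(2*μ*s) - 2*((AA a s : ℝ):ℂ) + (2*μ*s + 2*((AA a s : ℝ):ℂ)) = 0 := by ring
    rw [this, Complex.exp_zero, one_mul]
  unfold mm
  rw [← hcancel]
  ring

lemma hasDerivAt_II (ha : Continuous a) (hψ : Continuous ψ) (x : ℝ) :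
    HasDerivAt (II a μ ψ) (mm a μ ψ x) x := ftcC (continuous_mm ha hψ) x

lemma continuous_II (ha : Continuous a) (hψ : Continuous ψ) : Continuous (II a μ ψ) :=
  continuous_iff_continuousAt.2 fun x => (hasDerivAt_II ha hψ x).continuousAt

lemma II_zero (x : ℝ) : II a μ (fun _ => (0:ℂ)) x = 0 := by
  unfold II mm FF nn; simp

lemma II_sub {ψ₁ ψ₂ : ℝ → ℂ} (ha : Continuous a) (h1 : Continuous ψ₁) (h2 : Continuous ψ₂)
    (x : ℝ) : II a μ ψ₁ x - II a μ ψ₂ x = II a μ (fun t => ψ₁ t - ψ₂ t) x := by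
  have hn : ∀ t, nn a μ (fun t => ψ₁ t - ψ₂ t) t = nn a μ ψ₁ t - nn a μ ψ₂ t := by
    intro t; unfold nn; ring
  have hF : ∀ s, FF a μ (fun t => ψ₁ t - ψ₂ t) s = FF a μ ψ₁ s - FF a μ ψ₂ s := by
    intro s
    unfold FF
    rw [← intervalIntegral.integral_sub ((continuous_nn ha h1).intervalIntegrable 0 s)
      ((continuous_nn ha h2).intervalIntegrable 0 s)]
    exact intervalIntegral.integral_congr fun t _ => hn t
  have hm : ∀ s, mm a μ (fun t => ψ₁ t - ψ₂ t) s = mm a μ ψ₁ s - mm a μ ψ₂ s := by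
    intro s; unfold mm; rw [hF]; ring
  unfold II
  rw [← intervalIntegral.integral_sub ((continuous_mm ha h1).intervalIntegrable 0 x)
      ((continuous_mm ha h2).intervalIntegrable 0 x)]
  exact (intervalIntegral.integral_congr fun s _ => (hm s)).symm

lemma norm_mm_le (hre : 0 ≤ μ.re) {MA MQ : ℝ}
    (hMA : ∀ t ∈ Icc (0:ℝ) 1, |AA a t| ≤ MA)
    (hMQ : ∀ t ∈ Icc (0:ℝ) 1, ‖ψ t‖ ≤ MQ) {s : ℝ} (hs : s ∈ Icc (0:ℝ) 1) :
    ‖mm a μ ψ s‖ ≤ Real.exp (4*MA) * MQ := by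
  have hMQ0 : 0 ≤ MQ := le_trans (norm_nonneg _) (hMQ 0 ⟨le_rfl, zero_le_one⟩)
  unfold mm FF
  rw [← intervalIntegral.integral_const_mul]
  have hptwise : ∀ t ∈ Set.uIoc (0:ℝ) s,
      ‖Complex.exp (-(2*μ*s) - 2*((AA a s : ℝ):ℂ)) * nn a μ ψ t‖ ≤ Real.exp (4*MA) * MQ := by
    intro t ht
    rw [Set.uIoc_of_le hs.1] at ht
    have ht1 : t ∈ Icc (0:ℝ) 1 := ⟨ht.1.le, ht.2.trans hs.2⟩
    unfold nn
    rw [← mul_assoc, ← Complex.exp_add, norm_mul]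
    have hre' : (-(2*μ*s) - 2*((AA a s : ℝ):ℂ) + (2*μ*t + 2*((AA a t : ℝ):ℂ))).re
        = 2*μ.re*(t-s) + 2*(AA a t - AA a s) := by
      simp [Complex.add_re, Complex.sub_re, Complex.neg_re, Complex.mul_re,
        Complex.ofReal_re, Complex.ofReal_im]
      ring
    have hnorm : ‖Complex.exp (-(2*μ*s) - 2*((AA a s : ℝ):ℂ) + (2*μ*t + 2*((AA a t : ℝ):ℂ)))‖
        ≤ Real.exp (4*MA) := by
      rw [Complex.norm_exp, hre']
      apply Real.exp_le_exp.2
      have h1 : 2*μ.re*(t-s) ≤ 0 := by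
        apply mul_nonpos_of_nonneg_of_nonpos (by linarith) (by linarith [ht.2])
      have h2 : |AA a t| ≤ MA := hMA t ht1
      have h3 : |AA a s| ≤ MA := hMA s hs
      have := abs_le.1 h2; have := abs_le.1 h3
      linarith
    exact mul_le_mul hnorm (hMQ t ht1) (norm_nonneg _) (Real.exp_pos _).le
  calc ‖∫ t in (0:ℝ)..s, Complex.exp (-(2*μ*s) - 2*((AA a s : ℝ):ℂ)) * nn a μ ψ t‖
      ≤ Real.exp (4*MA) * MQ * |s - 0| :=
        intervalIntegral.norm_integral_le_of_norm_le_const hptwise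
    _ ≤ Real.exp (4*MA) * MQ * 1 := by
        apply mul_le_mul_of_nonneg_left _ (by positivity)
        rw [sub_zero, abs_of_nonneg hs.1]; exact hs.2
    _ = Real.exp (4*MA) * MQ := mul_one _

lemma keybound (ha : Continuous a) (hψ : Continuous ψ) (hre : 0 ≤ μ.re) (hμ : 1 ≤ ‖μ‖)
    {Ma MA MQ : ℝ} (hMa : ∀ t ∈ Icc (0:ℝ) 1, |a t| ≤ Ma)
    (hMA : ∀ t ∈ Icc (0:ℝ) 1, |AA a t| ≤ MA)
    (hMQ : ∀ t ∈ Icc (0:ℝ) 1, ‖ψ t‖ ≤ MQ) {x : ℝ} (hx : x ∈ Icc (0:ℝ) 1) :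
    ‖II a μ ψ x‖ ≤ (Real.exp (4*MA) * (2*Ma + 1) + 1) * MQ / ‖μ‖ := by
  have hμpos : (0:ℝ) < ‖μ‖ := lt_of_lt_of_le one_pos hμ
  have hμ0 : μ ≠ 0 := by intro h; rw [h] at hμpos; simp at hμpos
  have h2μ : (2:ℂ) * μ ≠ 0 := by simp [hμ0]
  have hMa0 : 0 ≤ Ma := le_trans (abs_nonneg _) (hMa 0 ⟨le_rfl, zero_le_one⟩)
  have hMQ0 : 0 ≤ MQ := le_trans (norm_nonneg _) (hMQ 0 ⟨le_rfl, zero_le_one⟩)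
  have hK2 : (0:ℝ) < Real.exp (4*MA) := Real.exp_pos _
  set G : ℝ → ℂ := fun s => Complex.exp (-2*((AA a s : ℝ):ℂ)) * FF a μ ψ s with hGdef
  set H : ℝ → ℂ := fun s => Complex.exp (-(2*μ*s)) * (-(2*μ)⁻¹) with hHdef
  set H' : ℝ → ℂ := fun s => Complex.exp (-(2*μ*s)) with hH'def
  set G' : ℝ → ℂ := fun s => (-2*((a s : ℝ):ℂ)) * G s + Complex.exp (2*μ*s) * ψ s with hG'def
  have hA := continuous_AA ha
  have hGderiv : ∀ s, HasDerivAt G (G' s) s := by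
    intro s
    have h1 : HasDerivAt (fun s : ℝ => -2*((AA a s : ℝ):ℂ)) (-2*((a s : ℝ):ℂ)) s :=
      (hasDerivAt_AA ha s).ofReal_comp.const_mul (-2)
    have h2 := (h1.cexp).mul (hasDerivAt_FF (μ := μ) ha hψ s)
    have hcancel : Complex.exp (-2*((AA a s : ℝ):ℂ)) * nn a μ ψ s
        = Complex.exp (2*μ*s) * ψ s := by
      unfold nn
      rw [← mul_assoc, ← Complex.exp_add,
        show -2*((AA a s : ℝ):ℂ) + (2*μ*s + 2*((AA a s : ℝ):ℂ)) = 2*μ*s by ring]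
    refine h2.congr_deriv (Eq.symm ?_)
    rw [hG'def, hGdef]
    simp only
    rw [← hcancel]
    ring
  have hHinner : ∀ s : ℝ, HasDerivAt (fun s : ℝ => -(2*μ*(s:ℂ))) (-(2*μ)) s := by
    intro s
    have h := ((Complex.ofRealCLM.hasDerivAt (x := s)).const_mul (2*μ)).neg
    exact h.congr_deriv (by simp)
  have hHderiv : ∀ s, HasDerivAt H (H' s) s := by
    intro s
    have h2 := ((hHinner s).cexp).mul_const (-(2*μ)⁻¹)
    refine h2.congr_deriv (Eq.symm ?_)
    show Complex.exp (-(2*μ*(s:ℂ))) = _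
    rw [mul_assoc (Complex.exp _), show ((-(2*μ)) * -(2*μ)⁻¹ : ℂ) = 1 by
      rw [neg_mul_neg, mul_inv_cancel₀ h2μ], mul_one]
  have hG'cont : Continuous G' := by
    have hGcont : Continuous G :=
      (Complex.continuous_exp.comp (by fun_prop)).mul (continuous_FF ha hψ)
    exact ((by fun_prop : Continuous (fun s : ℝ => -2*((a s : ℝ):ℂ))).mul hGcont).add
      ((Complex.continuous_exp.comp (by fun_prop)).mul hψ)
  have hH'cont : Continuous H' := Complex.continuous_exp.comp (by fun_prop)
  have ibp := intervalIntegral.integral_mul_deriv_eq_deriv_mul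
    (u := G) (v := H) (u' := G') (v' := H')
    (fun s _ => hGderiv s) (fun s _ => hHderiv s)
    (hG'cont.intervalIntegrable 0 x) (hH'cont.intervalIntegrable 0 x)
  have hmmGH : ∀ s, mm a μ ψ s = G s * H' s := by
    intro s
    rw [hGdef, hH'def]; simp only
    rw [mul_comm, ← mul_assoc, ← Complex.exp_add,
      show -(2*μ*(s:ℂ)) + -2*((AA a s : ℝ):ℂ) = -(2*μ*s) - 2*((AA a s : ℝ):ℂ) by ring]
    rfl
  have hIIeq : II a μ ψ x = G x * H x - G 0 * H 0 - ∫ s in (0:ℝ)..x, G' s * H s := by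
    rw [← ibp]
    exact intervalIntegral.integral_congr fun s _ => hmmGH s
  have hG0 : G 0 = 0 := by
    rw [hGdef]; simp only
    have : FF a μ ψ 0 = 0 := intervalIntegral.integral_same
    rw [this, mul_zero]
  have hHnorm : ‖(-(2*μ)⁻¹ : ℂ)‖ = (2*‖μ‖)⁻¹ := by
    rw [norm_neg, norm_inv, norm_mul]
    norm_num
  have hmc : ∀ s ∈ Icc (0:ℝ) 1,
      ‖mm a μ ψ s * (-(2*μ)⁻¹)‖ ≤ Real.exp (4*MA) * MQ * (2*‖μ‖)⁻¹ := by
    intro s hs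
    rw [norm_mul, hHnorm]
    exact mul_le_mul_of_nonneg_right (norm_mm_le hre hMA hMQ hs) (by positivity)
  have hGH : ∀ s ∈ Icc (0:ℝ) 1, ‖G s * H s‖ ≤ Real.exp (4*MA) * MQ * (2*‖μ‖)⁻¹ := by
    intro s hs
    have : G s * H s = mm a μ ψ s * (-(2*μ)⁻¹) := by
      rw [hmmGH s, hHdef, hH'def]; simp only; ring
    rw [this]
    exact hmc s hs
  have hexpc : ∀ s : ℝ, Complex.exp (2*μ*s) * H' s = 1 := by
    intro s
    rw [hH'def]; simp only
    rw [← Complex.exp_add, show (2*μ*(s:ℂ)) + -(2*μ*s) = 0 by ring, Complex.exp_zero]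
  have hG'H : ∀ s ∈ Icc (0:ℝ) 1,
      ‖G' s * H s‖ ≤ (2*Ma*(Real.exp (4*MA) * MQ) + MQ) * (2*‖μ‖)⁻¹ := by
    intro s hs
    have heq : G' s * H s = (-2*((a s : ℝ):ℂ)) * (mm a μ ψ s * (-(2*μ)⁻¹))
        + ψ s * (-(2*μ)⁻¹) := by
      have h1 : H s = H' s * (-(2*μ)⁻¹) := by rw [hHdef, hH'def]
      calc G' s * H s = (-2*((a s : ℝ):ℂ)) * ((G s * H' s) * (-(2*μ)⁻¹))
            + (Complex.exp (2*μ*s) * H' s) * (ψ s * (-(2*μ)⁻¹)) := by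
              rw [hG'def, h1]; simp only; ring
        _ = _ := by rw [← hmmGH s, hexpc s, one_mul]
    rw [heq]
    have hterm1 : ‖(-2*((a s : ℝ):ℂ)) * (mm a μ ψ s * (-(2*μ)⁻¹))‖
        ≤ 2*Ma*(Real.exp (4*MA) * MQ * (2*‖μ‖)⁻¹) := by
      rw [norm_mul]
      have h1 : ‖(-2*((a s : ℝ):ℂ))‖ ≤ 2*Ma := by
        rw [show (-2*((a s : ℝ):ℂ)) = ((-2 * a s : ℝ) : ℂ) by push_cast; ring,
          Complex.norm_real, Real.norm_eq_abs, abs_mul, abs_neg, abs_two]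
        exact mul_le_mul_of_nonneg_left (hMa s hs) (by norm_num)
      exact mul_le_mul h1 (hmc s hs) (norm_nonneg _) (by positivity)
    have hterm2 : ‖ψ s * (-(2*μ)⁻¹)‖ ≤ MQ * (2*‖μ‖)⁻¹ := by
      rw [norm_mul, hHnorm]
      exact mul_le_mul_of_nonneg_right (hMQ s hs) (by positivity)
    calc ‖_ + _‖ ≤ _ := norm_add_le _ _
      _ ≤ 2*Ma*(Real.exp (4*MA) * MQ * (2*‖μ‖)⁻¹) + MQ * (2*‖μ‖)⁻¹ :=
          add_le_add hterm1 hterm2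
      _ ≤ (2*Ma*(Real.exp (4*MA) * MQ) + MQ) * (2*‖μ‖)⁻¹ := le_of_eq (by ring)
  have hint : ‖∫ s in (0:ℝ)..x, G' s * H s‖
      ≤ (2*Ma*(Real.exp (4*MA) * MQ) + MQ) * (2*‖μ‖)⁻¹ := by
    calc ‖∫ s in (0:ℝ)..x, G' s * H s‖
        ≤ (2*Ma*(Real.exp (4*MA) * MQ) + MQ) * (2*‖μ‖)⁻¹ * |x - 0| := by
          apply intervalIntegral.norm_integral_le_of_norm_le_const
          intro t ht
          rw [Set.uIoc_of_le hx.1] at ht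
          exact hG'H t ⟨ht.1.le, ht.2.trans hx.2⟩
      _ ≤ (2*Ma*(Real.exp (4*MA) * MQ) + MQ) * (2*‖μ‖)⁻¹ * 1 := by
          apply mul_le_mul_of_nonneg_left _ (by positivity)
          rw [sub_zero, abs_of_nonneg hx.1]; exact hx.2
      _ = _ := mul_one _
  rw [hIIeq, hG0, zero_mul, sub_zero]
  have hb : (0:ℝ) ≤ Real.exp (4*MA)*MQ + 2*Ma*(Real.exp (4*MA)*MQ) + MQ := by positivity
  have hinv : (0:ℝ) ≤ ‖μ‖⁻¹ := by positivity
  calc ‖G x * H x - ∫ s in (0:ℝ)..x, G' s * H s‖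
      ≤ ‖G x * H x‖ + ‖∫ s in (0:ℝ)..x, G' s * H s‖ := norm_sub_le _ _
    _ ≤ Real.exp (4*MA) * MQ * (2*‖μ‖)⁻¹
        + (2*Ma*(Real.exp (4*MA) * MQ) + MQ) * (2*‖μ‖)⁻¹ := add_le_add (hGH x hx) hint
    _ ≤ (Real.exp (4*MA) * (2*Ma + 1) + 1) * MQ / ‖μ‖ := by
        rw [div_eq_mul_inv, mul_inv]
        nlinarith [mul_nonneg hb hinv]

def proj (x : ℝ) : ℝ := max 0 (min 1 x)

lemma proj_mem (x : ℝ) : proj x ∈ Icc (0:ℝ) 1 :=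
  ⟨le_max_left _ _, max_le zero_le_one (min_le_left _ _)⟩

lemma proj_eq {x : ℝ} (hx : x ∈ Icc (0:ℝ) 1) : proj x = x := by
  unfold proj; rw [min_eq_right hx.2, max_eq_right hx.1]

lemma continuous_proj : Continuous proj :=
  continuous_const.max (continuous_const.min continuous_id)

lemma core (a α b : ℝ → ℝ) (hα : Continuous α) (hb : Continuous b)
    (hd : ∀ x, HasDerivAt a (α x) x) :
    ∃ C : ℝ, 0 < C ∧ ∃ R : ℝ, 1 ≤ R ∧ ∀ μ : ℂ, 0 ≤ μ.re → R ≤ ‖μ‖ →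
      ∃ u u' u'' : ℝ → ℂ,
        (∀ x, HasDerivAt u (u' x) x) ∧ (∀ x, HasDerivAt u' (u'' x) x) ∧
        (∀ x ∈ Icc (0:ℝ) 1, u'' x = (μ^2 + 2*μ*((a x:ℝ):ℂ) - ((b x:ℝ):ℂ)) * u x) ∧
        u 0 = 1 ∧
        ∀ x ∈ Icc (0:ℝ) 1,
          ‖u x * Complex.exp (-(μ*x) - ((AA a x : ℝ):ℂ)) - 1‖ ≤ C/‖μ‖ := by
  have ha : Continuous a := continuous_iff_continuousAt.2 fun x => (hd x).continuousAt
  set q : ℝ → ℝ := fun t => α t + a t^2 + b t with hqdef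
  have hq : Continuous q := (hα.add (ha.pow 2)).add hb
  obtain ⟨Ma, hMa⟩ := isCompact_Icc.exists_bound_of_continuousOn
    (ha.continuousOn (s := Icc (0:ℝ) 1))
  obtain ⟨MA, hMA⟩ := isCompact_Icc.exists_bound_of_continuousOn
    ((continuous_AA ha).continuousOn (s := Icc (0:ℝ) 1))
  obtain ⟨Mq, hMq⟩ := isCompact_Icc.exists_bound_of_continuousOn
    (hq.continuousOn (s := Icc (0:ℝ) 1))
  simp only [Real.norm_eq_abs] at hMa hMA hMq
  have hMa0 : 0 ≤ Ma := le_trans (abs_nonneg _) (hMa 0 ⟨le_rfl, zero_le_one⟩)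
  have hMq0 : 0 ≤ Mq := le_trans (abs_nonneg _) (hMq 0 ⟨le_rfl, zero_le_one⟩)
  set Ck : ℝ := Real.exp (4*MA) * (2*Ma + 1) + 1 with hCkdef
  have hCk : 0 < Ck := by positivity
  refine ⟨2*Ck*Mq + 1, by positivity, max 1 (2*Ck*Mq), le_max_left _ _, ?_⟩
  intro μ hre hμR
  have hμ1 : (1:ℝ) ≤ ‖μ‖ := le_trans (le_max_left _ _) hμR
  have hμq : 2*Ck*Mq ≤ ‖μ‖ := le_trans (le_max_right _ _) hμR
  have hμpos : (0:ℝ) < ‖μ‖ := lt_of_lt_of_le one_pos hμ1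
  -- the integral operator on bounded continuous functions
  set ψf : BoundedContinuousFunction ℝ ℂ → ℝ → ℂ :=
    fun f t => ((q t : ℝ):ℂ) * f (proj t) with hψfdef
  have hψfc : ∀ f, Continuous (ψf f) := fun f =>
    (Complex.continuous_ofReal.comp hq).mul (f.continuous.comp continuous_proj)
  have hgc : ∀ f : BoundedContinuousFunction ℝ ℂ,
      Continuous (fun x => 1 - II a μ (ψf f) x) :=
    fun f => continuous_const.sub (continuous_II ha (hψfc f))
  have hgb : ∀ f : BoundedContinuousFunction ℝ ℂ,
      ∃ B, ∀ y ∈ Icc (0:ℝ) 1, ‖1 - II a μ (ψf f) y‖ ≤ B := by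
    intro f
    exact isCompact_Icc.exists_bound_of_continuousOn ((hgc f).continuousOn)
  choose B hB using hgb
  set Φ : BoundedContinuousFunction ℝ ℂ → BoundedContinuousFunction ℝ ℂ := fun f =>
    BoundedContinuousFunction.ofNormedAddCommGroup
      (fun x => 1 - II a μ (ψf f) (proj x)) ((hgc f).comp continuous_proj)
      (B f) (fun x => hB f (proj x) (proj_mem x)) with hΦdef
  have hΦapp : ∀ f x, Φ f x = 1 - II a μ (ψf f) (proj x) := fun f x => rfl
  -- Lipschitz estimate
  have key : ∀ f g : BoundedContinuousFunction ℝ ℂ, ∀ y ∈ Icc (0:ℝ) 1,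
      ‖II a μ (ψf f) y - II a μ (ψf g) y‖ ≤ Ck * (Mq * dist f g) / ‖μ‖ := by
    intro f g y hy
    rw [II_sub ha (hψfc f) (hψfc g)]
    have hsubc : Continuous (fun t => ψf f t - ψf g t) := (hψfc f).sub (hψfc g)
    have hbound : ∀ t ∈ Icc (0:ℝ) 1, ‖ψf f t - ψf g t‖ ≤ Mq * dist f g := by
      intro t ht
      have heq : ψf f t - ψf g t = ((q t : ℝ):ℂ) * (f (proj t) - g (proj t)) := by
        rw [hψfdef]; ring
      rw [heq, norm_mul, Complex.norm_real, Real.norm_eq_abs]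
      have h1 : ‖f (proj t) - g (proj t)‖ = dist (f (proj t)) (g (proj t)) :=
        (dist_eq_norm _ _).symm
      rw [h1]
      exact mul_le_mul (hMq t ht) (BoundedContinuousFunction.dist_coe_le_dist _)
        dist_nonneg (le_trans (abs_nonneg _) (hMq t ht))
    exact keybound ha hsubc hre hμ1 hMa hMA hbound hy
  have hlip : LipschitzWith (1/2 : NNReal) Φ := by
    apply LipschitzWith.of_dist_le_mul
    intro f g
    have h12 : ((1/2 : NNReal) : ℝ) = 1/2 := by norm_num
    rw [h12]
    apply (BoundedContinuousFunction.dist_le (by positivity)).2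
    intro x
    rw [dist_eq_norm, hΦapp, hΦapp,
      show (1 - II a μ (ψf f) (proj x)) - (1 - II a μ (ψf g) (proj x))
        = -(II a μ (ψf f) (proj x) - II a μ (ψf g) (proj x)) by ring, norm_neg]
    calc ‖II a μ (ψf f) (proj x) - II a μ (ψf g) (proj x)‖
        ≤ Ck * (Mq * dist f g) / ‖μ‖ := key f g _ (proj_mem x)
      _ ≤ 1/2 * dist f g := by
          have hdnn : (0:ℝ) ≤ dist f g := dist_nonneg
          rw [div_le_iff₀ hμpos]
          calc Ck * (Mq * dist f g) = (2*Ck*Mq) * dist f g / 2 := by ring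
            _ ≤ ‖μ‖ * dist f g / 2 := by gcongr
            _ = 1/2 * dist f g * ‖μ‖ := by ring
  have hhalf : (1/2 : NNReal) < 1 := by rw [← NNReal.coe_lt_coe]; norm_num
  have hcw : ContractingWith (1/2 : NNReal) Φ := ⟨hhalf, hlip⟩
  set w : BoundedContinuousFunction ℝ ℂ := ContractingWith.fixedPoint Φ hcw with hwdef
  have hfix : Φ w = w := hcw.fixedPoint_isFixedPt
  have hwx : ∀ x, w x = 1 - II a μ (ψf w) (proj x) := by
    intro x
    conv_lhs => rw [← hfix]
    exact hΦapp w x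
  -- norm bound on w
  have hΦ0 : ∀ x : ℝ, Φ 0 x = 1 := by
    intro x
    rw [hΦapp]
    have h0 : ψf (0 : BoundedContinuousFunction ℝ ℂ) = fun _ => (0:ℂ) := by
      funext t; simp [hψfdef]
    rw [h0, II_zero, sub_zero]
  have hnΦ0 : ‖Φ 0‖ ≤ 1 := by
    apply (BoundedContinuousFunction.norm_le (by norm_num)).2
    intro x; rw [hΦ0 x]; norm_num
  have hnw : ‖w‖ ≤ 2 := by
    have h1 : dist w (Φ 0) ≤ (1/2) * ‖w‖ := by
      have h2 : dist (Φ w) (Φ 0) ≤ (1/2 : NNReal) * dist w 0 := hlip.dist_le_mul w 0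
      rw [hfix, dist_zero_right] at h2
      calc dist w (Φ 0) ≤ ((1/2 : NNReal) : ℝ) * ‖w‖ := h2
        _ = (1/2) * ‖w‖ := by norm_num
    have h3 : ‖w‖ ≤ dist w (Φ 0) + ‖Φ 0‖ := by
      calc ‖w‖ = dist w 0 := (dist_zero_right w).symm
        _ ≤ dist w (Φ 0) + dist (Φ 0) 0 := dist_triangle _ _ _
        _ = dist w (Φ 0) + ‖Φ 0‖ := by rw [dist_zero_right]
    linarith
  have hw2 : ∀ t : ℝ, ‖w t‖ ≤ 2 :=
    fun t => le_trans (BoundedContinuousFunction.norm_coe_le_norm w t) hnw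
  -- the solution
  set ψw : ℝ → ℂ := ψf w with hψwdef
  have hψwc : Continuous ψw := hψfc w
  have hψwb : ∀ t ∈ Icc (0:ℝ) 1, ‖ψw t‖ ≤ Mq * 2 := by
    intro t ht
    rw [hψwdef, hψfdef]
    simp only
    rw [norm_mul, Complex.norm_real, Real.norm_eq_abs]
    exact mul_le_mul (hMq t ht) (hw2 _) (norm_nonneg _)
      (le_trans (abs_nonneg _) (hMq t ht))
  set wt : ℝ → ℂ := fun x => 1 - II a μ ψw x with hwtdef
  have hwteq : ∀ x ∈ Icc (0:ℝ) 1, wt x = w x := by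
    intro x hx
    rw [hwx x, proj_eq hx]
  have hwtd : ∀ x, HasDerivAt wt (-(mm a μ ψw x)) x :=
    fun x => (hasDerivAt_II ha hψwc x).const_sub 1
  set E : ℝ → ℂ := fun x => Complex.exp (μ*x + ((AA a x : ℝ):ℂ)) with hEdef
  have hEd : ∀ x, HasDerivAt E (E x * (μ + ((a x:ℝ):ℂ))) x := by
    intro x
    have hmul : HasDerivAt (fun x : ℝ => μ*(x:ℂ)) μ x := by
      simpa using ((Complex.ofRealCLM.hasDerivAt (x := x)).const_mul μ)
    have h1 : HasDerivAt (fun x : ℝ => μ*(x:ℂ) + ((AA a x : ℝ):ℂ)) (μ + ((a x:ℝ):ℂ)) x :=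
      hmul.add ((hasDerivAt_AA ha x).ofReal_comp)
    exact h1.cexp
  refine ⟨fun x => E x * wt x,
    fun x => E x * (μ + ((a x:ℝ):ℂ)) * wt x + E x * (-(mm a μ ψw x)),
    fun x => ((E x * (μ + ((a x:ℝ):ℂ)) * (μ + ((a x:ℝ):ℂ)) + E x * ((α x:ℝ):ℂ)) * wt x
        + (E x * (μ + ((a x:ℝ):ℂ))) * (-(mm a μ ψw x)))
      + (E x * (μ + ((a x:ℝ):ℂ)) * (-(mm a μ ψw x))
        + E x * (-((-(2*μ) - 2*((a x:ℝ):ℂ)) * mm a μ ψw x + ψw x))),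
    ?_, ?_, ?_, ?_, ?_⟩
  · intro x
    exact (hEd x).mul (hwtd x)
  · intro x
    have h1 : HasDerivAt (fun x => E x * (μ + ((a x:ℝ):ℂ)))
        (E x * (μ + ((a x:ℝ):ℂ)) * (μ + ((a x:ℝ):ℂ)) + E x * ((α x:ℝ):ℂ)) x :=
      (hEd x).mul ((hd x).ofReal_comp.const_add μ)
    have ht1 := h1.mul (hwtd x)
    have ht2 := (hEd x).mul ((hasDerivAt_mm (μ := μ) ha hψwc x).neg)
    exact ht1.add ht2
  · intro x hx
    beta_reduce
    have hψwx : ψw x = (((α x) : ℝ):ℂ) * wt x + (((a x)^2 : ℝ):ℂ) * wt x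
        + (((b x) : ℝ):ℂ) * wt x := by
      rw [hψwdef, hψfdef]
      simp only
      rw [proj_eq hx, ← hwteq x hx, hqdef]
      push_cast
      ring
    rw [hψwx]
    push_cast
    ring
  · show E 0 * wt 0 = 1
    have h1 : E 0 = 1 := by
      rw [hEdef]
      simp [AA_zero]
    have h2 : wt 0 = 1 := by
      rw [hwtdef]
      simp only
      have : II a μ ψw 0 = 0 := intervalIntegral.integral_same
      rw [this, sub_zero]
    rw [h1, h2, mul_one]
  · intro x hx
    have hcancel : (E x * wt x) * Complex.exp (-(μ*x) - ((AA a x : ℝ):ℂ)) = wt x := by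
      rw [hEdef]
      simp only
      rw [mul_comm _ (wt x), mul_assoc, ← Complex.exp_add,
        show (μ*(x:ℂ) + ((AA a x : ℝ):ℂ)) + (-(μ*x) - ((AA a x : ℝ):ℂ)) = 0 by ring,
        Complex.exp_zero, mul_one]
    rw [hcancel, show wt x - 1 = -(II a μ ψw x) by rw [hwtdef]; ring, norm_neg]
    calc ‖II a μ ψw x‖ ≤ Ck * (Mq * 2) / ‖μ‖ := by
          have := keybound ha hψwc hre hμ1 hMa hMA hψwb hx
          rw [← hCkdef] at this
          exact this
      _ ≤ (2*Ck*Mq + 1) / ‖μ‖ := by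
          gcongr
          nlinarith [hCk.le, hMq0]

lemma quot_bound {P : ℝ → ℂ} {ε : ℝ} (hε : ε ≤ 1/2)
    (hP : ∀ y ∈ Icc (0:ℝ) 1, ‖P y - 1‖ ≤ ε) :
    P 1 ≠ 0 ∧ ∀ y ∈ Icc (0:ℝ) 1, ‖P y * (P 1)⁻¹ - 1‖ ≤ 4*ε := by
  have h1 : ‖P 1 - 1‖ ≤ ε := hP 1 ⟨zero_le_one, le_rfl⟩
  have hε0 : 0 ≤ ε := le_trans (norm_nonneg _) (hP 0 ⟨le_rfl, zero_le_one⟩)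
  have hnP1 : 1/2 ≤ ‖P 1‖ := by
    have h2 : ‖(1:ℂ)‖ - ‖P 1‖ ≤ ‖(1:ℂ) - P 1‖ := norm_sub_norm_le _ _
    rw [norm_one, norm_sub_rev] at h2
    linarith
  have hP1 : P 1 ≠ 0 := by
    intro h; rw [h, norm_zero] at hnP1; linarith
  refine ⟨hP1, fun y hy => ?_⟩
  have heq : P y * (P 1)⁻¹ - 1 = (P y - P 1) * (P 1)⁻¹ := by field_simp
  rw [heq, norm_mul, norm_inv]
  have hPy : ‖P y - P 1‖ ≤ 2*ε := by
    calc ‖P y - P 1‖ = ‖(P y - 1) - (P 1 - 1)‖ := by congr 1; ring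
      _ ≤ ‖P y - 1‖ + ‖P 1 - 1‖ := norm_sub_le _ _
      _ ≤ 2*ε := by linarith [hP y hy]
  have hinv : ‖P 1‖⁻¹ ≤ 2 := by
    rw [show (2:ℝ) = (2⁻¹)⁻¹ by norm_num]
    apply inv_anti₀ (by norm_num)
    linarith
  calc ‖P y - P 1‖ * ‖P 1‖⁻¹ ≤ (2*ε) * 2 :=
      mul_le_mul hPy hinv (by positivity) (by positivity)
    _ = 4*ε := by ring

lemma AA_neg (f : ℝ → ℝ) (y : ℝ) : AA (fun t => -(f t)) y = -(AA f y) := by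
  unfold AA; simp

lemma AA_reflect {f : ℝ → ℝ} (hf : Continuous f) (y : ℝ) :
    AA (fun t => f (1 - t)) y = AA f 1 - AA f (1 - y) := by
  unfold AA
  rw [intervalIntegral.integral_comp_sub_left f 1]
  have h2 := intervalIntegral.integral_add_adjacent_intervals
    (hf.intervalIntegrable (μ := volume) 0 (1-y)) (hf.intervalIntegrable (μ := volume) (1-y) 1)
  rw [show (1:ℝ) - 0 = 1 by norm_num]
  linarith

end Stmt8Aux
set_option maxHeartbeats 1000000 in
open Stmt8Aux in
/-- The leading-order case of Lemma 3.1: for `a` continuously differentiable on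
`[0,1]` and `b` continuous on `[0,1]`, for `Im λ` large there exist solutions
`u₊, u₋` of `u'' = (λ² + 2λa(x) − b(x))u` with `u_±(0) = 1` and
`u_±(x) = e^{±λx ± ∫₀ˣ a}(1 + O(1/λ))` uniformly on `[0,1]`. -/
theorem stmt8 (a b : ℝ → ℝ)
    (ha : ContDiffOn ℝ 1 a (Set.Icc 0 1)) (hb : ContinuousOn b (Set.Icc 0 1)) :
    ∃ C : ℝ, 0 < C ∧ ∃ R : ℝ, 0 < R ∧ ∀ lam : ℂ, R ≤ lam.im →
      -- the solution u₊
      (∃ u u' : ℝ → ℂ,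
        (∀ x ∈ Set.Icc (0:ℝ) 1, HasDerivAt u (u' x) x) ∧
        (∀ x ∈ Set.Icc (0:ℝ) 1,
          HasDerivAt u' ((lam ^ 2 + 2 * lam * (a x : ℂ) - (b x : ℂ)) * u x) x) ∧
        u 0 = 1 ∧
        (∀ x ∈ Set.Icc (0:ℝ) 1,
          ‖u x * Complex.exp (-(lam * (x : ℂ)) - ((∫ t in (0:ℝ)..x, a t : ℝ) : ℂ)) - 1‖
            ≤ C / ‖lam‖)) ∧
      -- the solution u₋
      (∃ u u' : ℝ → ℂ,
        (∀ x ∈ Set.Icc (0:ℝ) 1, HasDerivAt u (u' x) x) ∧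
        (∀ x ∈ Set.Icc (0:ℝ) 1,
          HasDerivAt u' ((lam ^ 2 + 2 * lam * (a x : ℂ) - (b x : ℂ)) * u x) x) ∧
        u 0 = 1 ∧
        (∀ x ∈ Set.Icc (0:ℝ) 1,
          ‖u x * Complex.exp (lam * (x : ℂ) + ((∫ t in (0:ℝ)..x, a t : ℝ) : ℂ)) - 1‖
            ≤ C / ‖lam‖)) := by
  classical
  -- extend `a` to a C¹ function on ℝ and `b` to a continuous function on ℝ
  have hdc : ContinuousOn (derivWithin a (Set.Icc (0:ℝ) 1)) (Set.Icc 0 1) :=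
    ha.continuousOn_derivWithin (uniqueDiffOn_Icc zero_lt_one) le_rfl
  set α : ℝ → ℝ := fun x => derivWithin a (Set.Icc (0:ℝ) 1) (proj x) with hαdef
  have hαc : Continuous α := hdc.comp_continuous continuous_proj proj_mem
  set ae : ℝ → ℝ := fun x => a 0 + ∫ t in (0:ℝ)..x, α t with haedef
  have haed : ∀ x, HasDerivAt ae (α x) x := fun x => (ftcR hαc x).const_add (a 0)
  have haec : Continuous ae := continuous_iff_continuousAt.2 fun x => (haed x).continuousAt
  have haee : ∀ x ∈ Set.Icc (0:ℝ) 1, ae x = a x := by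
    intro x hx
    have hxle : (0:ℝ) ≤ x := hx.1
    have h1 : (∫ t in (0:ℝ)..x, α t) = ∫ t in (0:ℝ)..x, derivWithin a (Set.Icc (0:ℝ) 1) t := by
      apply intervalIntegral.integral_congr
      intro t ht
      rw [Set.uIcc_of_le hxle] at ht
      have ht1 : t ∈ Set.Icc (0:ℝ) 1 := ⟨ht.1, le_trans ht.2 hx.2⟩
      simp only [hαdef]
      rw [proj_eq ht1]
    have h2 : (∫ t in (0:ℝ)..x, derivWithin a (Set.Icc (0:ℝ) 1) t) = a x - a 0 := by
      apply intervalIntegral.integral_eq_sub_of_hasDeriv_right_of_le hxle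
      · exact (ha.continuousOn).mono (Set.Icc_subset_Icc le_rfl hx.2)
      · intro t ht
        have ht1 : t ∈ Set.Icc (0:ℝ) 1 := ⟨ht.1.le, le_trans ht.2.le hx.2⟩
        have hnh : Set.Icc (0:ℝ) 1 ∈ nhds t :=
          Icc_mem_nhds ht.1 (lt_of_lt_of_le ht.2 hx.2)
        exact (((ha.differentiableOn one_ne_zero t ht1).hasDerivWithinAt).hasDerivAt
          hnh).hasDerivWithinAt
      · have hco : ContinuousOn (derivWithin a (Set.Icc (0:ℝ) 1)) (Set.uIcc 0 x) := by
          rw [Set.uIcc_of_le hxle]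
          exact hdc.mono (Set.Icc_subset_Icc le_rfl hx.2)
        exact hco.intervalIntegrable
    rw [haedef]; simp only; rw [h1, h2]; ring
  set be : ℝ → ℝ := fun x => b (proj x) with hbedef
  have hbec : Continuous be := hb.comp_continuous continuous_proj proj_mem
  have hbee : ∀ x ∈ Set.Icc (0:ℝ) 1, be x = b x := by
    intro x hx; simp only [hbedef]; rw [proj_eq hx]
  -- reflected / negated data
  set a3 : ℝ → ℝ := fun y => -(ae (1 - y)) with ha3def
  set a4 : ℝ → ℝ := fun y => ae (1 - y) with ha4def
  set b3 : ℝ → ℝ := fun y => be (1 - y) with hb3def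
  have hb3c : Continuous b3 := hbec.comp (continuous_const.sub continuous_id)
  have hrefl : ∀ x, HasDerivAt a4 (-(α (1-x))) x := by
    intro x
    have h1 : HasDerivAt (fun y:ℝ => 1 - y) (-1) x := by
      simpa using (hasDerivAt_id x).const_sub 1
    have h2 := (haed (1-x)).comp x h1
    rw [mul_neg_one] at h2
    exact h2
  have hrefl2 : ∀ x, HasDerivAt a3 (α (1-x)) x := by
    intro x
    have := (hrefl x).neg
    rw [neg_neg] at this
    exact this
  -- the four instances of the core construction
  obtain ⟨C1, hC1, R1, hR1, hcore1⟩ := core ae α be hαc hbec haed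
  obtain ⟨C2, hC2, R2, hR2, hcore2⟩ :=
    core (fun x => -(ae x)) (fun x => -(α x)) be hαc.neg hbec (fun x => (haed x).neg)
  obtain ⟨C3, hC3, R3, hR3, hcore3⟩ :=
    core a3 (fun y => α (1-y)) b3 (hαc.comp (continuous_const.sub continuous_id)) hb3c hrefl2
  obtain ⟨C4, hC4, R4, hR4, hcore4⟩ :=
    core a4 (fun y => -(α (1-y))) b3 (hαc.comp (continuous_const.sub continuous_id)).neg hb3c hrefl
  set C0 : ℝ := max (max C1 C2) (max C3 C4) with hC0def
  have hC1le : C1 ≤ C0 := le_trans (le_max_left _ _) (le_max_left _ _)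
  have hC2le : C2 ≤ C0 := le_trans (le_max_right _ _) (le_max_left _ _)
  have hC3le : C3 ≤ C0 := le_trans (le_max_left _ _) (le_max_right _ _)
  have hC4le : C4 ≤ C0 := le_trans (le_max_right _ _) (le_max_right _ _)
  have hC0 : 0 < C0 := lt_of_lt_of_le hC1 hC1le
  refine ⟨4*C0 + 1, by positivity, max (max (max R1 R2) (max R3 R4)) (2*C0), ?_, ?_⟩
  · have : (1:ℝ) ≤ max (max (max R1 R2) (max R3 R4)) (2*C0) :=
      le_trans hR1 (le_trans (le_max_left _ _) (le_trans (le_max_left _ _) (le_max_left _ _)))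
    linarith
  intro lam hlam
  have hnormge : max (max (max R1 R2) (max R3 R4)) (2*C0) ≤ ‖lam‖ := by
    refine le_trans hlam ?_
    calc lam.im ≤ |lam.im| := le_abs_self _
      _ ≤ ‖lam‖ := Complex.abs_im_le_norm lam
  have hR1' : R1 ≤ ‖lam‖ := le_trans (le_trans (le_trans (le_max_left _ _) (le_max_left _ _))
    (le_max_left _ _)) hnormge
  have hR2' : R2 ≤ ‖lam‖ := le_trans (le_trans (le_trans (le_max_right _ _) (le_max_left _ _))
    (le_max_left _ _)) hnormge
  have hR3' : R3 ≤ ‖lam‖ := le_trans (le_trans (le_trans (le_max_left _ _) (le_max_right _ _))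
    (le_max_left _ _)) hnormge
  have hR4' : R4 ≤ ‖lam‖ := le_trans (le_trans (le_trans (le_max_right _ _) (le_max_right _ _))
    (le_max_left _ _)) hnormge
  have h2C0 : 2*C0 ≤ ‖lam‖ := le_trans (le_max_right _ _) hnormge
  have hlampos : (0:ℝ) < ‖lam‖ := lt_of_lt_of_le one_pos (le_trans hR1 hR1')
  have hAAe : ∀ x ∈ Set.Icc (0:ℝ) 1, (∫ t in (0:ℝ)..x, a t) = AA ae x := by
    intro x hx
    unfold AA
    apply intervalIntegral.integral_congr
    intro t ht
    rw [Set.uIcc_of_le hx.1] at ht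
    exact (haee t ⟨ht.1, le_trans ht.2 hx.2⟩).symm
  constructor
  · -- u₊
    rcases le_or_gt 0 lam.re with hre | hre
    · -- Re λ ≥ 0 : direct
      obtain ⟨u, u', u'', hu, hu', hueq, hu0, hubd⟩ := hcore1 lam hre hR1'
      refine ⟨u, u', fun x _ => hu x, ?_, hu0, ?_⟩
      · intro x hx
        have h := hu' x
        rw [hueq x hx, haee x hx, hbee x hx] at h
        exact h
      · intro x hx
        rw [show ((∫ t in (0:ℝ)..x, a t : ℝ) : ℂ) = ((AA ae x : ℝ):ℂ) from by
          rw [hAAe x hx]]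
        refine le_trans (hubd x hx) ?_
        gcongr
        linarith
    · -- Re λ < 0 : reflect
      have hre' : 0 ≤ (-lam).re := by simp only [Complex.neg_re]; linarith
      obtain ⟨v, v', v'', hv, hv', hveq, hv0, hvbd⟩ :=
        hcore3 (-lam) hre' (by rw [norm_neg]; exact hR3')
      set P : ℝ → ℂ := fun y => v y * Complex.exp (-(-lam*y) - ((AA a3 y : ℝ):ℂ)) with hPdef
      have hPbd : ∀ y ∈ Set.Icc (0:ℝ) 1, ‖P y - 1‖ ≤ C3/‖lam‖ := by
        intro y hy
        have := hvbd y hy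
        rwa [norm_neg] at this
      have hhalf : C3/‖lam‖ ≤ 1/2 := by
        rw [div_le_iff₀ hlampos]; linarith
      obtain ⟨hP1ne, hquot⟩ := quot_bound hhalf hPbd
      have hv1 : v 1 ≠ 0 := by
        intro h
        apply hP1ne
        simp only [hPdef]
        rw [h, zero_mul]
      have hAA3 : ∀ y, AA a3 y = AA ae (1-y) - AA ae 1 := by
        intro y
        have h1 : AA a3 y = -(AA (fun t => ae (1-t)) y) := AA_neg (fun t => ae (1-t)) y
        rw [h1, AA_reflect haec y]
        ring
      have h1x : ∀ x : ℝ, HasDerivAt (fun y:ℝ => 1 - y) (-1) x := fun x => by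
        simpa using (hasDerivAt_id x).const_sub 1
      refine ⟨fun x => v (1-x) * (v 1)⁻¹, fun x => ((-1:ℝ) • v' (1-x)) * (v 1)⁻¹,
        ?_, ?_, ?_, ?_⟩
      · intro x _
        exact ((hv (1-x)).scomp x (h1x x)).mul_const ((v 1)⁻¹)
      · intro x hx
        have hx' : 1-x ∈ Set.Icc (0:ℝ) 1 := ⟨by linarith [hx.2], by linarith [hx.1]⟩
        have h2 := (((hv' (1-x)).scomp x (h1x x)).const_smul (-1:ℝ)).mul_const ((v 1)⁻¹)
        have h3 : ((-1:ℝ) • ((-1:ℝ) • v'' (1-x))) * (v 1)⁻¹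
            = (lam^2 + 2*lam*((a x:ℝ):ℂ) - ((b x:ℝ):ℂ)) * (v (1-x) * (v 1)⁻¹) := by
          rw [hveq (1-x) hx']
          simp only [ha3def, hb3def, neg_one_smul, neg_neg]
          rw [show (1:ℝ)-(1-x) = x by ring, haee x hx, hbee x hx]
          push_cast
          ring
        rw [← h3]
        exact h2
      · show v (1-0) * (v 1)⁻¹ = 1
        rw [show (1:ℝ)-0 = 1 by norm_num, mul_inv_cancel₀ hv1]
      · intro x hx
        have hx' : 1-x ∈ Set.Icc (0:ℝ) 1 := ⟨by linarith [hx.2], by linarith [hx.1]⟩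
        have hkey : (v (1-x) * (v 1)⁻¹)
            * Complex.exp (-(lam * (x:ℂ)) - ((∫ t in (0:ℝ)..x, a t : ℝ):ℂ))
            = P (1-x) * (P 1)⁻¹ := by
          simp only [hPdef]
          rw [mul_inv, ← Complex.exp_neg]
          rw [show (v (1-x) * Complex.exp (-(-lam*((1-x:ℝ):ℂ)) - ((AA a3 (1-x) : ℝ):ℂ)))
              * ((v 1)⁻¹ * Complex.exp (-(-(-lam*((1:ℝ):ℂ)) - ((AA a3 1 : ℝ):ℂ))))
              = (v (1-x) * (v 1)⁻¹) * (Complex.exp (-(-lam*((1-x:ℝ):ℂ)) - ((AA a3 (1-x) : ℝ):ℂ))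
                * Complex.exp (-(-(-lam*((1:ℝ):ℂ)) - ((AA a3 1 : ℝ):ℂ)))) from by ring,
            ← Complex.exp_add]
          congr 2
          rw [hAA3 (1-x), hAA3 1, show (1:ℝ)-(1-x) = x by ring, show (1:ℝ)-1 = 0 by norm_num,
            AA_zero, ← hAAe x hx]
          push_cast
          ring
        rw [hkey]
        refine le_trans (hquot (1-x) hx') ?_
        rw [show 4*(C3/‖lam‖) = (4*C3)/‖lam‖ from by ring]
        gcongr
        linarith
  · -- u₋
    rcases lt_or_ge lam.re 0 with hre | hre
    · -- Re λ < 0 : direct with μ = -λ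
      have hre' : 0 ≤ (-lam).re := by simp only [Complex.neg_re]; linarith
      obtain ⟨u, u', u'', hu, hu', hueq, hu0, hubd⟩ :=
        hcore2 (-lam) hre' (by rw [norm_neg]; exact hR2')
      refine ⟨u, u', fun x _ => hu x, ?_, hu0, ?_⟩
      · intro x hx
        have h := hu' x
        rw [hueq x hx] at h
        have hc : ((-lam)^2 + 2*(-lam)*((-(ae x):ℝ):ℂ) - ((be x:ℝ):ℂ)) * u x
            = (lam^2 + 2*lam*((a x:ℝ):ℂ) - ((b x:ℝ):ℂ)) * u x := by
          rw [haee x hx, hbee x hx]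
          push_cast
          ring
        rw [hc] at h
        exact h
      · intro x hx
        have h := hubd x hx
        rw [norm_neg] at h
        have hexp : Complex.exp (-(-lam*(x:ℂ)) - ((AA (fun x => -(ae x)) x : ℝ):ℂ))
            = Complex.exp (lam*(x:ℂ) + ((∫ t in (0:ℝ)..x, a t : ℝ):ℂ)) := by
          congr 1
          rw [AA_neg ae x, ← hAAe x hx]
          push_cast
          ring
        rw [hexp] at h
        refine le_trans h ?_
        gcongr
        linarith
    · -- Re λ ≥ 0 : reflect with μ = λ
      obtain ⟨v, v', v'', hv, hv', hveq, hv0, hvbd⟩ := hcore4 lam hre hR4'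
      set P : ℝ → ℂ := fun y => v y * Complex.exp (-(lam*y) - ((AA a4 y : ℝ):ℂ)) with hPdef
      have hhalf : C4/‖lam‖ ≤ 1/2 := by
        rw [div_le_iff₀ hlampos]; linarith
      have hPbd : ∀ y ∈ Set.Icc (0:ℝ) 1, ‖P y - 1‖ ≤ C4/‖lam‖ := fun y hy => hvbd y hy
      obtain ⟨hP1ne, hquot⟩ := quot_bound hhalf hPbd
      have hv1 : v 1 ≠ 0 := by
        intro h
        apply hP1ne
        simp only [hPdef]
        rw [h, zero_mul]
      have hAA4 : ∀ y, AA a4 y = AA ae 1 - AA ae (1-y) := fun y => AA_reflect haec y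
      have h1x : ∀ x : ℝ, HasDerivAt (fun y:ℝ => 1 - y) (-1) x := fun x => by
        simpa using (hasDerivAt_id x).const_sub 1
      refine ⟨fun x => v (1-x) * (v 1)⁻¹, fun x => ((-1:ℝ) • v' (1-x)) * (v 1)⁻¹,
        ?_, ?_, ?_, ?_⟩
      · intro x _
        exact ((hv (1-x)).scomp x (h1x x)).mul_const ((v 1)⁻¹)
      · intro x hx
        have hx' : 1-x ∈ Set.Icc (0:ℝ) 1 := ⟨by linarith [hx.2], by linarith [hx.1]⟩
        have h2 := (((hv' (1-x)).scomp x (h1x x)).const_smul (-1:ℝ)).mul_const ((v 1)⁻¹)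
        have h3 : ((-1:ℝ) • ((-1:ℝ) • v'' (1-x))) * (v 1)⁻¹
            = (lam^2 + 2*lam*((a x:ℝ):ℂ) - ((b x:ℝ):ℂ)) * (v (1-x) * (v 1)⁻¹) := by
          rw [hveq (1-x) hx']
          simp only [ha4def, hb3def, neg_one_smul, neg_neg]
          rw [show (1:ℝ)-(1-x) = x by ring, haee x hx, hbee x hx]
          push_cast
          ring
        rw [← h3]
        exact h2
      · show v (1-0) * (v 1)⁻¹ = 1
        rw [show (1:ℝ)-0 = 1 by norm_num, mul_inv_cancel₀ hv1]
      · intro x hx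
        have hx' : 1-x ∈ Set.Icc (0:ℝ) 1 := ⟨by linarith [hx.2], by linarith [hx.1]⟩
        have hkey : (v (1-x) * (v 1)⁻¹)
            * Complex.exp (lam * (x:ℂ) + ((∫ t in (0:ℝ)..x, a t : ℝ):ℂ))
            = P (1-x) * (P 1)⁻¹ := by
          simp only [hPdef]
          rw [mul_inv, ← Complex.exp_neg]
          rw [show (v (1-x) * Complex.exp (-(lam*((1-x:ℝ):ℂ)) - ((AA a4 (1-x) : ℝ):ℂ)))
              * ((v 1)⁻¹ * Complex.exp (-(-(lam*((1:ℝ):ℂ)) - ((AA a4 1 : ℝ):ℂ))))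
              = (v (1-x) * (v 1)⁻¹) * (Complex.exp (-(lam*((1-x:ℝ):ℂ)) - ((AA a4 (1-x) : ℝ):ℂ))
                * Complex.exp (-(-(lam*((1:ℝ):ℂ)) - ((AA a4 1 : ℝ):ℂ)))) from by ring,
            ← Complex.exp_add]
          congr 2
          rw [hAA4 (1-x), hAA4 1, show (1:ℝ)-(1-x) = x by ring, show (1:ℝ)-1 = 0 by norm_num,
            AA_zero, ← hAAe x hx]
          push_cast
          ring
        rw [hkey]
        refine le_trans (hquot (1-x) hx') ?_
        rw [show 4*(C4/‖lam‖) = (4*C4)/‖lam‖ from by ring]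
        gcongr
        linarith
end
end
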